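/- arXiv:1311.7045 — 5 statements merged into one kernel-verified Lean document; each statement's English description precedes it below -/
import Mathlib

section
/- Let N ≥ 2 and let Φ = {φ_{m,n} : m = 1,…,4; n = 1,…,N−1} be the 4N−4 measurement vectors in ℂ^N defined below. If x, y ∈ ℂ^N both satisfy x[n] ≠ 0 and y[n] ≠ 0 for every n = 2,…,N−1, and |⟨x, φ_{m,n}⟩|² = |⟨y, φ_{m,n}⟩|² for all m = 1,…,4 and n = 1,…,N−1, then there exists c ∈ ℂ with |c| = 1 such that y = c·x. (Theorem 2, part Φ: the intensity measurement map A_Φ is injective on S_Φ = {x ∈ ℂ^N : x[n] ≠ 0 for all n = 2,…,N−1} modulo a unimodular constant.) -/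
open Complex Matrix MeasureTheory

noncomputable section

/-- α = √((1 − 1/√3)/2) -/
def alph : ℂ := (Real.sqrt ((1 - 1/Real.sqrt 3)/2) : ℝ)

/-- β = e^{i5π/4}·√((1 + 1/√3)/2) -/
def beta : ℂ := Complex.exp (Complex.I * (5 * (Real.pi : ℂ) / 4)) *
  (Real.sqrt ((1 + 1/Real.sqrt 3)/2) : ℝ)

/-- the four frame vectors a₁ = (α,β), a₂ = (β,α), a₃ = (α,−β), a₄ = (−β,α) in ℂ² -/
def coef : Fin 4 → Fin 2 → ℂ := ![![alph, beta], ![beta, alph], ![alph, -beta], ![-beta, alph]]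

/-- inner product ⟨x,y⟩ = Σ x[n]·conj(y[n]) -/
def inn {N : ℕ} (x y : Fin N → ℂ) : ℂ := ∑ i, x i * (starRingEnd ℂ) (y i)

/-- Euclidean norm ‖x‖ = √⟨x,x⟩ -/
def nrm {N : ℕ} (x : Fin N → ℂ) : ℝ := Real.sqrt (inn x x).re

/-- outer product x y* -/
def outer {N : ℕ} (x y : Fin N → ℂ) : Matrix (Fin N) (Fin N) ℂ :=
  fun i j => x i * (starRingEnd ℂ) (y j)

/-- measurement vectors φ_{m,n} (0-based n: nonzero entries at positions n and n+1) -/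
def phiv (N : ℕ) (m : Fin 4) (n : ℕ) : Fin N → ℂ :=
  fun i => if (i : ℕ) = n then coef m 0 else if (i : ℕ) = n + 1 then coef m 1 else 0

/-- measurement vectors ψ_{m,n} (0-based n: nonzero entries at positions 0 and n+1) -/
def psiv (N : ℕ) (m : Fin 4) (n : ℕ) : Fin N → ℂ :=
  fun i => if (i : ℕ) = 0 then coef m 0 else if (i : ℕ) = n + 1 then coef m 1 else 0

/-- Hilbert–Schmidt inner product ⟨X,Y⟩ = trace(Y*X) -/
def hs {N : ℕ} (X Y : Matrix (Fin N) (Fin N) ℂ) : ℂ := Matrix.trace (Yᴴ * X)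

/-- Frobenius (Hilbert–Schmidt) norm -/
def frob {N : ℕ} (X : Matrix (Fin N) (Fin N) ℂ) : ℝ := Real.sqrt (Matrix.trace (Xᴴ * X)).re

/-- spectral norm (largest singular value) -/
def specNorm {N : ℕ} (A : Matrix (Fin N) (Fin N) ℂ) : ℝ :=
  sSup {r : ℝ | ∃ v : Fin N → ℂ, nrm v ≤ 1 ∧ r = nrm (A.mulVec v)}

/-! ### Auxiliary lemmas -/

lemma sqrt3_pos : (0:ℝ) < Real.sqrt 3 := Real.sqrt_pos.mpr (by norm_num)

lemma sqrt3_gt_one : (1:ℝ) < Real.sqrt 3 := by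
  nlinarith [Real.sq_sqrt (by norm_num : (0:ℝ) ≤ 3), Real.sqrt_nonneg 3]

lemma arg1_nonneg : (0:ℝ) ≤ (1 - 1/Real.sqrt 3)/2 := by
  have h1 := sqrt3_gt_one
  have : 1/Real.sqrt 3 < 1 := by
    rw [div_lt_one sqrt3_pos]; exact h1
  linarith

lemma arg2_nonneg : (0:ℝ) ≤ (1 + 1/Real.sqrt 3)/2 := by positivity

/-- the real number b with β = b(1+i) -/
def bv : ℝ := -(Real.sqrt 2/2 * Real.sqrt ((1 + 1/Real.sqrt 3)/2))

lemma beta_eq : beta = (bv : ℂ) * (1 + I) := by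
  unfold beta bv
  have h1 : Complex.I * (5 * (Real.pi:ℂ)/4) = ((5*Real.pi/4 : ℝ) : ℂ) * I := by
    push_cast; ring
  rw [h1, Complex.exp_mul_I, ← Complex.ofReal_cos, ← Complex.ofReal_sin]
  have hpi : 5*Real.pi/4 = Real.pi + Real.pi/4 := by ring
  have hc : Real.cos (5*Real.pi/4) = -(Real.sqrt 2/2) := by
    rw [hpi, Real.cos_add]; simp [Real.cos_pi_div_four]
  have hs : Real.sin (5*Real.pi/4) = -(Real.sqrt 2/2) := by
    rw [hpi, Real.sin_add]; simp [Real.sin_pi_div_four]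
  rw [hc, hs]; push_cast; ring

lemma conj_alph : (starRingEnd ℂ) alph = alph := Complex.conj_ofReal _

lemma hA2R : Real.sqrt 3 * ((Real.sqrt ((1 - 1/Real.sqrt 3)/2)) * (Real.sqrt ((1 - 1/Real.sqrt 3)/2))) * 2 = Real.sqrt 3 - 1 := by
  rw [Real.mul_self_sqrt arg1_nonneg]
  field_simp

lemma hb2R : Real.sqrt 3 * (bv * bv) * 4 = Real.sqrt 3 + 1 := by
  have h2 : Real.sqrt 2 * Real.sqrt 2 = 2 := Real.mul_self_sqrt (by norm_num)
  have hB : Real.sqrt ((1 + 1/Real.sqrt 3)/2) * Real.sqrt ((1 + 1/Real.sqrt 3)/2) = (1 + 1/Real.sqrt 3)/2 := Real.mul_self_sqrt arg2_nonneg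
  have h3 : Real.sqrt 3 ≠ 0 := sqrt3_pos.ne'
  have hbv : bv * bv = (Real.sqrt 2 * Real.sqrt 2)/4 * (Real.sqrt ((1 + 1/Real.sqrt 3)/2) * Real.sqrt ((1 + 1/Real.sqrt 3)/2)) := by
    unfold bv; ring
  rw [h2, hB] at hbv
  rw [hbv]
  field_simp

lemma hA2C : ((Real.sqrt 3 : ℝ):ℂ) * (alph * alph) * 2 = ((Real.sqrt 3 : ℝ):ℂ) - 1 := by
  unfold alph; exact_mod_cast congrArg (Complex.ofReal) hA2R

lemma hb2C : ((Real.sqrt 3 : ℝ):ℂ) * ((bv:ℂ) * (bv:ℂ)) * 4 = ((Real.sqrt 3 : ℝ):ℂ) + 1 := by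
  exact_mod_cast congrArg (Complex.ofReal) hb2R

lemma alph_ne : alph ≠ 0 := by
  unfold alph
  simp only [ne_eq, Complex.ofReal_eq_zero]
  have h1 := sqrt3_gt_one
  have : 0 < (1 - 1/Real.sqrt 3)/2 := by
    have : 1/Real.sqrt 3 < 1 := by rw [div_lt_one sqrt3_pos]; exact h1
    linarith
  positivity

lemma bv_ne : (bv:ℂ) ≠ 0 := by
  simp only [ne_eq, Complex.ofReal_eq_zero]
  unfold bv
  have : 0 < Real.sqrt 2/2 * Real.sqrt ((1 + 1/Real.sqrt 3)/2) := by
    have h3 : 0 < (1 + 1/Real.sqrt 3)/2 := by positivity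
    have := Real.sqrt_pos.mpr h3
    have h2 := Real.sqrt_pos.mpr (by norm_num : (0:ℝ) < 2)
    positivity
  linarith [this]

/-- the key local lemma: the four rank-one measurements on a pair of coordinates
determine the moduli and the cross term. -/
lemma key (z0 z1 w0 w1 : ℂ)
    (h : ∀ m : Fin 4, ‖z0 * (starRingEnd ℂ) (coef m 0) + z1 * (starRingEnd ℂ) (coef m 1)‖ ^ 2
        = ‖w0 * (starRingEnd ℂ) (coef m 0) + w1 * (starRingEnd ℂ) (coef m 1)‖ ^ 2) :
    ‖z0‖ = ‖w0‖ ∧ ‖z1‖ = ‖w1‖ ∧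
      z0 * (starRingEnd ℂ) z1 = w0 * (starRingEnd ℂ) w1 := by
  have conv : ∀ u v : ℂ, ‖u‖ ^ 2 = ‖v‖ ^ 2 →
      u * (starRingEnd ℂ) u = v * (starRingEnd ℂ) v := by
    intro u v huv
    rw [Complex.mul_conj, Complex.mul_conj]
    rw [Complex.sq_norm, Complex.sq_norm] at huv
    exact_mod_cast huv
  have e1 := conv _ _ (h 0)
  have e2 := conv _ _ (h 1)
  have e3 := conv _ _ (h 2)
  have e4 := conv _ _ (h 3)
  simp only [coef, Matrix.cons_val_zero, Matrix.cons_val_one, Matrix.head_cons,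
    Matrix.cons_val_two, Matrix.cons_val_three, Matrix.tail_cons, beta_eq, _root_.map_add,
    _root_.map_mul, _root_.map_sub, _root_.map_neg, _root_.map_one, Complex.conj_I, Complex.conj_ofReal, conj_alph] at e1 e2 e3 e4
  set s : ℂ := ((Real.sqrt 3 : ℝ):ℂ) with hs
  set a : ℂ := alph
  set b : ℂ := ((bv:ℝ):ℂ)
  have h13 : a*a*(z0*(starRingEnd ℂ) z0 - w0*(starRingEnd ℂ) w0)
      + 2*(b*b)*(z1*(starRingEnd ℂ) z1 - w1*(starRingEnd ℂ) w1) = 0 := by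
    linear_combination (e1 + e3)/2 + (b*b*(z1*(starRingEnd ℂ) z1 - w1*(starRingEnd ℂ) w1))*Complex.I_sq
  have h24 : 2*(b*b)*(z0*(starRingEnd ℂ) z0 - w0*(starRingEnd ℂ) w0)
      + a*a*(z1*(starRingEnd ℂ) z1 - w1*(starRingEnd ℂ) w1) = 0 := by
    linear_combination (e2 + e4)/2 + (b*b*(z0*(starRingEnd ℂ) z0 - w0*(starRingEnd ℂ) w0))*Complex.I_sq
  have hd1 : a*b*((1+I)*(z0*(starRingEnd ℂ) z1 - w0*(starRingEnd ℂ) w1)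
      + (1-I)*((starRingEnd ℂ) z0 * z1 - (starRingEnd ℂ) w0 * w1)) = 0 := by
    linear_combination (e1 - e3)/2
  have hd2 : a*b*((1-I)*(z0*(starRingEnd ℂ) z1 - w0*(starRingEnd ℂ) w1)
      + (1+I)*((starRingEnd ℂ) z0 * z1 - (starRingEnd ℂ) w0 * w1)) = 0 := by
    linear_combination (e2 - e4)/2
  have hab : a*b ≠ 0 := mul_ne_zero alph_ne bv_ne
  have hUV : (z0*(starRingEnd ℂ) z1 - w0*(starRingEnd ℂ) w1)
      + ((starRingEnd ℂ) z0 * z1 - (starRingEnd ℂ) w0 * w1) = 0 := by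
    have hh : a*b*(((z0*(starRingEnd ℂ) z1 - w0*(starRingEnd ℂ) w1)
      + ((starRingEnd ℂ) z0 * z1 - (starRingEnd ℂ) w0 * w1))) = 0 := by
      linear_combination (hd1 + hd2)/2
    rcases mul_eq_zero.mp hh with h' | h'
    · exact absurd h' hab
    · exact h'
  have hUV2 : (z0*(starRingEnd ℂ) z1 - w0*(starRingEnd ℂ) w1)
      - ((starRingEnd ℂ) z0 * z1 - (starRingEnd ℂ) w0 * w1) = 0 := by
    have hh : (a*b*((z0*(starRingEnd ℂ) z1 - w0*(starRingEnd ℂ) w1)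
      - ((starRingEnd ℂ) z0 * z1 - (starRingEnd ℂ) w0 * w1)))*I = 0 := by
      linear_combination (hd1 - hd2)/2
    rcases mul_eq_zero.mp hh with h' | h'
    · rcases mul_eq_zero.mp h' with h'' | h''
      · exact absurd h'' hab
      · exact h''
    · exact absurd h' Complex.I_ne_zero
  have hU : z0*(starRingEnd ℂ) z1 = w0*(starRingEnd ℂ) w1 := by
    linear_combination (hUV + hUV2)/2
  have hL1 : (s-1)*(z0*(starRingEnd ℂ) z0 - w0*(starRingEnd ℂ) w0)
      + (s+1)*(z1*(starRingEnd ℂ) z1 - w1*(starRingEnd ℂ) w1) = 0 := by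
    linear_combination 2*s*h13 - (z0*(starRingEnd ℂ) z0 - w0*(starRingEnd ℂ) w0)*hA2C
      - (z1*(starRingEnd ℂ) z1 - w1*(starRingEnd ℂ) w1)*hb2C
  have hL2 : (s+1)*(z0*(starRingEnd ℂ) z0 - w0*(starRingEnd ℂ) w0)
      + (s-1)*(z1*(starRingEnd ℂ) z1 - w1*(starRingEnd ℂ) w1) = 0 := by
    linear_combination 2*s*h24 - (z0*(starRingEnd ℂ) z0 - w0*(starRingEnd ℂ) w0)*hb2C
      - (z1*(starRingEnd ℂ) z1 - w1*(starRingEnd ℂ) w1)*hA2C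
  have hPQ : (z0*(starRingEnd ℂ) z0 - w0*(starRingEnd ℂ) w0)
      = (z1*(starRingEnd ℂ) z1 - w1*(starRingEnd ℂ) w1) := by
    linear_combination (hL2 - hL1)/2
  have hs_ne : s ≠ 0 := by
    rw [hs]; simp only [ne_eq, Complex.ofReal_eq_zero]; exact sqrt3_pos.ne'
  have hP : z0*(starRingEnd ℂ) z0 = w0*(starRingEnd ℂ) w0 := by
    have hh : 2*s*(z0*(starRingEnd ℂ) z0 - w0*(starRingEnd ℂ) w0) = 0 := by
      linear_combination hL1 + (s+1)*hPQ
    rcases mul_eq_zero.mp hh with h' | h'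
    · rcases mul_eq_zero.mp h' with h'' | h''
      · norm_num at h''
      · exact absurd h'' hs_ne
    · linear_combination h'
  have hQ : z1*(starRingEnd ℂ) z1 = w1*(starRingEnd ℂ) w1 := by
    linear_combination hP - hPQ
  have absof : ∀ u v : ℂ, u * (starRingEnd ℂ) u = v * (starRingEnd ℂ) v →
      ‖u‖ = ‖v‖ := by
    intro u v huv
    rw [Complex.mul_conj, Complex.mul_conj] at huv
    rw [Complex.norm_def, Complex.norm_def]
    exact congrArg Real.sqrt (by exact_mod_cast huv)
  exact ⟨absof _ _ hP, absof _ _ hQ, hU⟩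

lemma inn_phiv {N : ℕ} (x : Fin N → ℂ) (m : Fin 4) (n : ℕ) (hn : n + 1 < N) :
    inn x (phiv N m n) = x ⟨n, by omega⟩ * (starRingEnd ℂ) (coef m 0)
      + x ⟨n+1, hn⟩ * (starRingEnd ℂ) (coef m 1) := by
  unfold inn phiv
  rw [Fintype.sum_eq_add (⟨n, by omega⟩ : Fin N) (⟨n+1, hn⟩ : Fin N)
    (by simp [Fin.ext_iff])
    (fun i hi => by
      have h1 : (i : ℕ) ≠ n := fun h => hi.1 (Fin.ext h)
      have h2 : (i : ℕ) ≠ n + 1 := fun h => hi.2 (Fin.ext h)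
      simp [h1, h2])]
  simp

lemma unimod_conj_mul {c : ℂ} (hc : ‖c‖ = 1) : (starRingEnd ℂ) c * c = 1 := by
  rw [mul_comm, Complex.mul_conj]
  rw [Complex.normSq_eq_norm_sq, hc]
  norm_num

lemma step_fwd {c u0 u1 v0 v1 : ℂ} (hc : ‖c‖ = 1) (h0 : u0 ≠ 0)
    (hv0 : v0 = c * u0) (hrel : u0 * (starRingEnd ℂ) u1 = v0 * (starRingEnd ℂ) v1) :
    v1 = c * u1 := by
  have hcc := unimod_conj_mul hc
  have h1 : (starRingEnd ℂ) u1 = c * (starRingEnd ℂ) v1 := by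
    apply mul_left_cancel₀ h0
    rw [hv0] at hrel
    linear_combination hrel
  have h2 := congrArg (starRingEnd ℂ) h1
  simp only [_root_.map_mul, Complex.conj_conj] at h2
  rw [h2]
  linear_combination (-v1) * hcc

lemma step_bwd {c u0 u1 v0 v1 : ℂ} (hc : ‖c‖ = 1) (h1 : u1 ≠ 0)
    (hv1 : v1 = c * u1) (hrel : u0 * (starRingEnd ℂ) u1 = v0 * (starRingEnd ℂ) v1) :
    v0 = c * u0 := by
  have hcc := unimod_conj_mul hc
  have hu1c : (starRingEnd ℂ) u1 ≠ 0 := by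
    simpa using h1
  have h2 : u0 = v0 * (starRingEnd ℂ) c := by
    apply mul_right_cancel₀ hu1c
    rw [hv1] at hrel
    rw [_root_.map_mul] at hrel
    linear_combination hrel
  rw [h2]
  linear_combination (-v0) * hcc

/-- Theorem 2 (part Φ): injectivity modulo a unimodular constant on
`S_Φ = {x : x[n] ≠ 0 for all n = 2,…,N−1}` (1-based), i.e. 0-based indices 0 < i < N−1. -/
theorem phase_retrieval_injective_Phi (N : ℕ) (hN : 2 ≤ N) (x y : Fin N → ℂ)
    (hx : ∀ i : Fin N, 0 < (i : ℕ) → (i : ℕ) < N - 1 → x i ≠ 0)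
    (hy : ∀ i : Fin N, 0 < (i : ℕ) → (i : ℕ) < N - 1 → y i ≠ 0)
    (hmeas : ∀ (m : Fin 4) (n : ℕ), n + 1 < N →
      ‖inn x (phiv N m n)‖ ^ 2 = ‖inn y (phiv N m n)‖ ^ 2) :
    ∃ c : ℂ, ‖c‖ = 1 ∧ y = c • x := by
  have pair : ∀ (n : ℕ) (hn : n + 1 < N),
      ‖x ⟨n, by omega⟩‖ = ‖y ⟨n, by omega⟩‖ ∧
      ‖x ⟨n+1, hn⟩‖ = ‖y ⟨n+1, hn⟩‖ ∧
      x ⟨n, by omega⟩ * (starRingEnd ℂ) (x ⟨n+1, hn⟩)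
        = y ⟨n, by omega⟩ * (starRingEnd ℂ) (y ⟨n+1, hn⟩) := by
    intro n hn
    apply key
    intro m
    rw [← inn_phiv x m n hn, ← inn_phiv y m n hn]
    exact hmeas m n hn
  by_cases hN2 : N = 2
  · subst hN2
    obtain ⟨habs0, habs1, hrel0⟩ := pair 0 (by omega)
    by_cases h0 : x ⟨0, by omega⟩ = 0
    · have hy0 : y ⟨0, by omega⟩ = 0 := by
        have : ‖y ⟨0, by omega⟩‖ = 0 := by rw [← habs0, h0]; simp
        exact norm_eq_zero.mp this
      by_cases h1 : x ⟨1, by omega⟩ = 0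
      · have hy1 : y ⟨1, by omega⟩ = 0 := by
          have : ‖y ⟨1, by omega⟩‖ = 0 := by rw [← habs1, h1]; simp
          exact norm_eq_zero.mp this
        refine ⟨1, by simp, ?_⟩
        funext i
        fin_cases i <;> simp_all
      · refine ⟨y ⟨1, by omega⟩ / x ⟨1, by omega⟩, ?_, ?_⟩
        · rw [norm_div, ← habs1, div_self]
          simpa using h1
        · funext i
          fin_cases i <;> simp only [Pi.smul_apply, smul_eq_mul]
          · rw [hy0, h0]; ring
          · rw [div_mul_cancel₀ _ h1]
    · set c := y ⟨0, by omega⟩ / x ⟨0, by omega⟩ with hcdef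
      have hc : ‖c‖ = 1 := by
        rw [hcdef, norm_div, ← habs0, div_self]
        simpa using h0
      have hy0 : y ⟨0, by omega⟩ = c * x ⟨0, by omega⟩ := by
        rw [hcdef, div_mul_cancel₀ _ h0]
      have hy1 : y ⟨1, by omega⟩ = c * x ⟨1, by omega⟩ :=
        step_fwd hc h0 hy0 hrel0
      refine ⟨c, hc, ?_⟩
      funext i
      fin_cases i <;> simp only [Pi.smul_apply, smul_eq_mul]
      · exact hy0
      · exact hy1
  · have hN3 : 3 ≤ N := by omega
    have hx1 : x ⟨1, by omega⟩ ≠ 0 := hx ⟨1, by omega⟩ (by simp) (by simp; omega)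
    set c := y ⟨1, by omega⟩ / x ⟨1, by omega⟩ with hcdef
    have habs1 : ‖x ⟨1, by omega⟩‖ = ‖y ⟨1, by omega⟩‖ :=
      (pair 0 (by omega)).2.1
    have hc : ‖c‖ = 1 := by
      rw [hcdef, norm_div, ← habs1, div_self]
      simpa using hx1
    have hy1 : y ⟨1, by omega⟩ = c * x ⟨1, by omega⟩ := by
      rw [hcdef, div_mul_cancel₀ _ hx1]
    have hint : ∀ k, ∀ (hk : k < N - 1), 1 ≤ k →
        y ⟨k, by omega⟩ = c * x ⟨k, by omega⟩ := by
      intro k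
      induction k with
      | zero => intro _ h; omega
      | succ k ih =>
        intro hk hk1
        by_cases hk0 : k = 0
        · subst hk0; exact hy1
        · have hkk : k < N - 1 := by omega
          have ihk := ih hkk (by omega)
          have hxk : x ⟨k, by omega⟩ ≠ 0 := hx ⟨k, by omega⟩ (by simp; omega) (by simpa using hkk)
          have hrel := (pair k (by omega)).2.2
          exact step_fwd hc hxk ihk hrel
    have hy0 : y ⟨0, by omega⟩ = c * x ⟨0, by omega⟩ := by
      have hrel := (pair 0 (by omega)).2.2
      exact step_bwd hc hx1 (hint 1 (by omega) le_rfl) hrel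
    have hylast : y ⟨N-2+1, by omega⟩ = c * x ⟨N-2+1, by omega⟩ := by
      have hrel := (pair (N-2) (by omega)).2.2
      have hxk : x ⟨N-2, by omega⟩ ≠ 0 := hx ⟨N-2, by omega⟩ (by simp; omega) (by simp; omega)
      exact step_fwd hc hxk (hint (N-2) (by omega) (by omega)) hrel
    refine ⟨c, hc, ?_⟩
    funext i
    simp only [Pi.smul_apply, smul_eq_mul]
    obtain h | h | h : (i:ℕ) = 0 ∨ (1 ≤ (i:ℕ) ∧ (i:ℕ) < N-1) ∨ (i:ℕ) = N - 1 := by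
      have := i.isLt; omega
    · have : i = ⟨0, by omega⟩ := Fin.ext h
      rw [this]; exact hy0
    · have : i = ⟨(i:ℕ), i.isLt⟩ := Fin.ext rfl
      rw [this]; exact hint (i:ℕ) h.2 h.1
    · have : i = ⟨N-2+1, by omega⟩ := Fin.ext (show (i:ℕ) = N-2+1 by omega)
      rw [this]; exact hylast
end
end

section
/- Let N ≥ 2 and let Ψ = {ψ_{m,n} : m = 1,…,4; n = 1,…,N−1} be the 4N−4 measurement vectors in ℂ^N defined below. If x, y ∈ ℂ^N both satisfy x[1] ≠ 0 and y[1] ≠ 0, and |⟨x, ψ_{m,n}⟩|² = |⟨y, ψ_{m,n}⟩|² for all m = 1,…,4 and n = 1,…,N−1, then there exists c ∈ ℂ with |c| = 1 such that y = c·x. (Theorem 2, part Ψ: the intensity measurement map A_Ψ is injective on S_Ψ = {x ∈ ℂ^N : x[1] ≠ 0} modulo a unimodular constant.) -/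
open Complex Matrix MeasureTheory

noncomputable section

def pv : ℝ := Real.sqrt ((1 - 1/Real.sqrt 3)/2)
def qv : ℝ := -(Real.sqrt 2/2 * Real.sqrt ((1 + 1/Real.sqrt 3)/2))

lemma arg1_pos : (0:ℝ) < (1 - 1/Real.sqrt 3)/2 := by
  have h := sqrt3_gt_one
  have : 1/Real.sqrt 3 < 1 := by
    rw [div_lt_one (by linarith)]; exact h
  linarith

lemma arg2_pos : (0:ℝ) < (1 + 1/Real.sqrt 3)/2 := by
  have h := sqrt3_gt_one
  have : 0 < 1/Real.sqrt 3 := by positivity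
  linarith

lemma pv_sq : pv^2 = (1 - 1/Real.sqrt 3)/2 := Real.sq_sqrt arg1_pos.le

lemma qv_sq : 2*qv^2 = (1 + 1/Real.sqrt 3)/2 := by
  have h2 : Real.sqrt 2 ^ 2 = 2 := Real.sq_sqrt (by norm_num)
  have hs : Real.sqrt ((1 + 1/Real.sqrt 3)/2) ^ 2 = (1 + 1/Real.sqrt 3)/2 :=
    Real.sq_sqrt arg2_pos.le
  unfold qv
  nlinarith [h2, hs]

lemma pv_ne : pv ≠ 0 := ne_of_gt (Real.sqrt_pos.mpr arg1_pos)

lemma qv_ne : qv ≠ 0 := by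
  unfold qv
  have h1 : Real.sqrt 2 > 0 := Real.sqrt_pos.mpr (by norm_num)
  have h2 : Real.sqrt ((1 + 1/Real.sqrt 3)/2) > 0 := Real.sqrt_pos.mpr arg2_pos
  nlinarith

lemma pq_sum : pv^2 + 2*qv^2 = 1 := by rw [pv_sq, qv_sq]; ring

lemma pq_diff : pv^2 - 2*qv^2 ≠ 0 := by
  rw [pv_sq, qv_sq]
  have : 0 < 1/Real.sqrt 3 := by positivity
  intro h; nlinarith

lemma alph_re : alph.re = pv := by simp [alph, pv]
lemma alph_im : alph.im = 0 := by simp [alph]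

lemma beta_comp : beta.re = qv ∧ beta.im = qv := by
  have h1 : Complex.I * (5 * (Real.pi:ℂ)/4) = ((Real.pi + Real.pi/4 : ℝ) : ℂ) * Complex.I := by
    push_cast; ring
  have hc : Real.cos (Real.pi + Real.pi/4) = -(Real.sqrt 2/2) := by
    rw [Real.cos_add, Real.cos_pi, Real.sin_pi, Real.cos_pi_div_four]; ring
  have hsn : Real.sin (Real.pi + Real.pi/4) = -(Real.sqrt 2/2) := by
    rw [Real.sin_add, Real.cos_pi, Real.sin_pi, Real.sin_pi_div_four]; ring
  unfold beta
  rw [h1, Complex.exp_mul_I, ← Complex.ofReal_cos, ← Complex.ofReal_sin, hc, hsn]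
  constructor <;>
    simp [qv, Complex.add_re, Complex.add_im, Complex.mul_re, Complex.mul_im]

lemma keyR (p q a1 a2 b1 b2 c1 c2 d1 d2 : ℝ)
    (hp : p ≠ 0) (hq : q ≠ 0) (hd : p^2 - 2*q^2 ≠ 0) (hs1 : p^2 + 2*q^2 = 1)
    (h0 : (p*a1+q*(b1+b2))^2 + (p*a2+q*(b2-b1))^2
        = (p*c1+q*(d1+d2))^2 + (p*c2+q*(d2-d1))^2)
    (h1 : (q*(a1+a2)+p*b1)^2 + (q*(a2-a1)+p*b2)^2
        = (q*(c1+c2)+p*d1)^2 + (q*(c2-c1)+p*d2)^2)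
    (h2 : (p*a1-q*(b1+b2))^2 + (p*a2-q*(b2-b1))^2
        = (p*c1-q*(d1+d2))^2 + (p*c2-q*(d2-d1))^2)
    (h3 : (q*(a1+a2)-p*b1)^2 + (q*(a2-a1)-p*b2)^2
        = (q*(c1+c2)-p*d1)^2 + (q*(c2-c1)-p*d2)^2) :
    a1^2+a2^2 = c1^2+c2^2 ∧ b1^2+b2^2 = d1^2+d2^2 ∧
    a1*b1+a2*b2 = c1*d1+c2*d2 ∧ a2*b1-a1*b2 = c2*d1-c1*d2 := by
  have hpq : p*q ≠ 0 := mul_ne_zero hp hq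
  have e13 : p*q*((a1*b1+a2*b2) - (a2*b1-a1*b2))
      = p*q*((c1*d1+c2*d2) - (c2*d1-c1*d2)) := by linear_combination (h0 - h2)/4
  have e24 : p*q*((a1*b1+a2*b2) + (a2*b1-a1*b2))
      = p*q*((c1*d1+c2*d2) + (c2*d1-c1*d2)) := by linear_combination (h1 - h3)/4
  have hRe : a1*b1+a2*b2 = c1*d1+c2*d2 :=
    mul_left_cancel₀ hpq (by linear_combination (e13+e24)/2)
  have hIm : a2*b1-a1*b2 = c2*d1-c1*d2 :=
    mul_left_cancel₀ hpq (by linear_combination (e24-e13)/2)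
  have eS1 : p^2*(a1^2+a2^2) + 2*q^2*(b1^2+b2^2)
      = p^2*(c1^2+c2^2) + 2*q^2*(d1^2+d2^2) := by linear_combination (h0+h2)/2
  have eS2 : 2*q^2*(a1^2+a2^2) + p^2*(b1^2+b2^2)
      = 2*q^2*(c1^2+c2^2) + p^2*(d1^2+d2^2) := by linear_combination (h1+h3)/2
  have eD : (a1^2+a2^2) - (b1^2+b2^2) = (c1^2+c2^2) - (d1^2+d2^2) :=
    mul_left_cancel₀ hd (by linear_combination eS1 - eS2)
  have eA : (a1^2+a2^2) + (b1^2+b2^2) = (c1^2+c2^2) + (d1^2+d2^2) := by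
    linear_combination eS1 + eS2
      - ((a1^2+a2^2)+(b1^2+b2^2)-(c1^2+c2^2)-(d1^2+d2^2)) * hs1
  exact ⟨by linarith, by linarith, hRe, hIm⟩

lemma inn_psiv {N : ℕ} (x : Fin N → ℂ) (m : Fin 4) (n : ℕ) (hn : n + 1 < N) :
    inn x (psiv N m n) =
      x ⟨0, by omega⟩ * (starRingEnd ℂ) (coef m 0) +
      x ⟨n + 1, hn⟩ * (starRingEnd ℂ) (coef m 1) := by
  have h0 : (0:ℕ) < N := by omega
  have key : ∀ i : Fin N,
      x i * (starRingEnd ℂ) (psiv N m n i)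
        = (if i = ⟨0, h0⟩ then x ⟨0, h0⟩ * (starRingEnd ℂ) (coef m 0) else 0)
        + (if i = ⟨n+1, hn⟩ then x ⟨n+1, hn⟩ * (starRingEnd ℂ) (coef m 1) else 0) := by
    intro i
    rcases eq_or_ne (i:ℕ) 0 with h | h
    · have hi : i = ⟨0, h0⟩ := Fin.ext h
      subst hi
      simp [psiv, Fin.ext_iff]
    · rcases eq_or_ne (i:ℕ) (n+1) with h2 | h2
      · have hi : i = ⟨n+1, hn⟩ := Fin.ext h2
        subst hi
        simp [psiv, Fin.ext_iff]
      · simp [psiv, h, h2, Fin.ext_iff]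
  unfold inn
  rw [Finset.sum_congr rfl (fun i _ => key i), Finset.sum_add_distrib,
    Finset.sum_ite_eq', Finset.sum_ite_eq']
  simp


/-- Theorem 2 (part Ψ): injectivity modulo a unimodular constant on
`S_Ψ = {x : x[1] ≠ 0}` (1-based first entry = 0-based index 0). -/
theorem phase_retrieval_injective_Psi (N : ℕ) (hN : 2 ≤ N) (x y : Fin N → ℂ)
    (hx : x ⟨0, by omega⟩ ≠ 0) (hy : y ⟨0, by omega⟩ ≠ 0)
    (hmeas : ∀ (m : Fin 4) (n : ℕ), n + 1 < N →
      ‖inn x (psiv N m n)‖ ^ 2 = ‖inn y (psiv N m n)‖ ^ 2) :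
    ∃ c : ℂ, ‖c‖ = 1 ∧ y = c • x := by
  have h0N : (0:ℕ) < N := by omega
  set x0 : ℂ := x ⟨0, by omega⟩ with hx0def
  set y0 : ℂ := y ⟨0, by omega⟩ with hy0def
  have key : ∀ (n : ℕ) (hn : n + 1 < N),
      Complex.normSq x0 = Complex.normSq y0 ∧
      x0 * (starRingEnd ℂ) (x ⟨n+1, hn⟩) = y0 * (starRingEnd ℂ) (y ⟨n+1, hn⟩) := by
    intro n hn
    have H : ∀ m : Fin 4,
        Complex.normSq (x0 * (starRingEnd ℂ) (coef m 0)
            + x ⟨n+1, hn⟩ * (starRingEnd ℂ) (coef m 1))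
          = Complex.normSq (y0 * (starRingEnd ℂ) (coef m 0)
            + y ⟨n+1, hn⟩ * (starRingEnd ℂ) (coef m 1)) := by
      intro m
      have h := hmeas m n hn
      rw [inn_psiv x m n hn, inn_psiv y m n hn, Complex.sq_norm, Complex.sq_norm] at h
      exact h
    set a1 := x0.re; set a2 := x0.im
    set b1 := (x ⟨n+1, hn⟩).re; set b2 := (x ⟨n+1, hn⟩).im
    set c1 := y0.re; set c2 := y0.im
    set d1 := (y ⟨n+1, hn⟩).re; set d2 := (y ⟨n+1, hn⟩).im
    have H0 := H 0
    have H1 := H 1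
    have H2 := H 2
    have H3 := H 3
    rw [show coef 0 0 = alph from rfl, show coef 0 1 = beta from rfl] at H0
    rw [show coef 1 0 = beta from rfl, show coef 1 1 = alph from rfl] at H1
    rw [show coef 2 0 = alph from rfl, show coef 2 1 = -beta from rfl] at H2
    rw [show coef 3 0 = -beta from rfl, show coef 3 1 = alph from rfl] at H3
    simp only [Complex.normSq_apply, Complex.add_re, Complex.add_im,
      Complex.mul_re, Complex.mul_im, Complex.conj_re, Complex.conj_im, map_neg,
      Complex.neg_re, Complex.neg_im, alph_re, alph_im, beta_comp.1, beta_comp.2]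
      at H0 H1 H2 H3
    have r0 : (pv*a1+qv*(b1+b2))^2 + (pv*a2+qv*(b2-b1))^2
        = (pv*c1+qv*(d1+d2))^2 + (pv*c2+qv*(d2-d1))^2 := by linear_combination H0
    have r1 : (qv*(a1+a2)+pv*b1)^2 + (qv*(a2-a1)+pv*b2)^2
        = (qv*(c1+c2)+pv*d1)^2 + (qv*(c2-c1)+pv*d2)^2 := by linear_combination H1
    have r2 : (pv*a1-qv*(b1+b2))^2 + (pv*a2-qv*(b2-b1))^2
        = (pv*c1-qv*(d1+d2))^2 + (pv*c2-qv*(d2-d1))^2 := by linear_combination H2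
    have r3 : (qv*(a1+a2)-pv*b1)^2 + (qv*(a2-a1)-pv*b2)^2
        = (qv*(c1+c2)-pv*d1)^2 + (qv*(c2-c1)-pv*d2)^2 := by linear_combination H3
    obtain ⟨hA, _, hRe, hIm⟩ := keyR pv qv a1 a2 b1 b2 c1 c2 d1 d2
      pv_ne qv_ne pq_diff pq_sum r0 r1 r2 r3
    refine ⟨?_, ?_⟩
    · simp only [Complex.normSq_apply]; linear_combination hA
    · apply Complex.ext <;>
        simp only [Complex.mul_re, Complex.mul_im, Complex.conj_re, Complex.conj_im]
      · linear_combination hRe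
      · linear_combination hIm
  have hA0 := (key 0 (by omega)).1
  have habs : ‖y0‖ = ‖x0‖ := by
    rw [Complex.norm_def, Complex.norm_def, hA0]
  refine ⟨y0 / x0, ?_, ?_⟩
  · rw [norm_div, habs, div_self (by simpa using hx)]
  · funext i
    have hA0' : x0 * (starRingEnd ℂ) x0 = y0 * (starRingEnd ℂ) y0 := by
      rw [Complex.mul_conj, Complex.mul_conj]
      exact_mod_cast congrArg Complex.ofReal hA0
    rcases eq_or_ne (i:ℕ) 0 with h | h
    · have hi : i = ⟨0, h0N⟩ := Fin.ext h
      subst hi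
      show y0 = (y0 / x0) • x0
      rw [smul_eq_mul]
      field_simp
    · have hn : ((i:ℕ) - 1) + 1 < N := by omega
      have hi : i = ⟨((i:ℕ)-1)+1, hn⟩ := Fin.ext (show (i:ℕ) = ((i:ℕ)-1)+1 by omega)
      obtain ⟨_, hC⟩ := key ((i:ℕ)-1) hn
      have hC' : (starRingEnd ℂ) x0 * x ⟨((i:ℕ)-1)+1, hn⟩
          = (starRingEnd ℂ) y0 * y ⟨((i:ℕ)-1)+1, hn⟩ := by
        have := congrArg (starRingEnd ℂ) hC
        simpa using this
      have hxc : (starRingEnd ℂ) x0 ≠ 0 := by simpa using hx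
      have hmain : y0 * x ⟨((i:ℕ)-1)+1, hn⟩ = x0 * y ⟨((i:ℕ)-1)+1, hn⟩ := by
        apply mul_left_cancel₀ hxc
        linear_combination y0 * hC' - (y ⟨((i:ℕ)-1)+1, hn⟩) * hA0'
      rw [hi]
      show y ⟨((i:ℕ)-1)+1, hn⟩ = (y0 / x0) • x ⟨((i:ℕ)-1)+1, hn⟩
      rw [smul_eq_mul]
      field_simp
      linear_combination -hmain
end
end

section
/- Let K ≥ 2 and let a₁,…,a_{K²} ∈ ℂ^K satisfy ‖a_m‖ = 1 for all m and |⟨a_m, a_n⟩|² = 1/(K+1) for all m ≠ n. For ν ∈ ℝ^{K²} define the Hermitian matrix ΔQ = ((K+1)/K)·Σ_{m=1}^{K²} ν_m·(a_m a_m* − (1/(K+1))·I_K). Then (1/√K)·‖ν‖ ≤ ‖ΔQ‖_F ≤ √(1 + 1/K)·‖ν‖, where ‖·‖_F is the Frobenius (Hilbert–Schmidt) norm and ‖ν‖ is the Euclidean norm of ν. (Lemma 1, with the lower bound corrected: ‖ΔQ‖_F² = (1/K²)·νᵀB ν where B = (K²+K)I − J, J the all-ones matrix, whose extreme eigenvalues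 are K and K(K+1).) -/
open Complex Matrix MeasureTheory

noncomputable section

lemma trace_outer {N : ℕ} (x y : Fin N → ℂ) : Matrix.trace (outer x y) = inn x y := by
  simp [Matrix.trace, Matrix.diag, outer, inn]

lemma outer_mul_outer {N : ℕ} (x y : Fin N → ℂ) :
    outer x x * outer y y = inn y x • outer x y := by
  ext i j
  simp only [Matrix.mul_apply, outer, Matrix.smul_apply, inn, smul_eq_mul, Finset.sum_mul]
  exact Finset.sum_congr rfl fun k _ => by ring

lemma outer_conjT {N : ℕ} (x : Fin N → ℂ) : (outer x x)ᴴ = outer x x := by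
  ext i j
  simp [outer, Matrix.conjTranspose_apply, mul_comm]

lemma inn_self_eq_one {N : ℕ} (x : Fin N → ℂ) (h : nrm x = 1) : inn x x = 1 := by
  have h1 : inn x x = ((∑ i, Complex.normSq (x i) : ℝ) : ℂ) := by
    simp [inn, Complex.mul_conj]
  have h2 : (0:ℝ) ≤ ∑ i, Complex.normSq (x i) :=
    Finset.sum_nonneg fun i _ => Complex.normSq_nonneg _
  have h3 : Real.sqrt (∑ i, Complex.normSq (x i)) = 1 := by
    rw [nrm, h1] at h; simpa using h
  have h4 : (∑ i, Complex.normSq (x i)) = 1 := by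
    have := congrArg (· ^ 2) h3
    simpa [Real.sq_sqrt h2] using this
  rw [h1, h4]; norm_num

lemma inn_conj_mul {N : ℕ} (x y : Fin N → ℂ) :
    inn y x * inn x y = ((‖inn x y‖)^2 : ℝ) := by
  have h : inn y x = (starRingEnd ℂ) (inn x y) := by
    simp only [inn, map_sum, _root_.map_mul, Complex.conj_conj]
    exact Finset.sum_congr rfl fun i _ => by ring
  rw [h, ← Complex.normSq_eq_norm_sq, mul_comm, Complex.mul_conj]

/-- Lemma 1 (with corrected lower bound): for the noise matrix
ΔQ = ((K+1)/K)·Σ_m ν_m·(a_m a_m* − (1/(K+1))·I_K) one has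
(1/√K)·‖ν‖ ≤ ‖ΔQ‖_F ≤ √(1+1/K)·‖ν‖. -/
theorem error_matrix_norm_bounds (K : ℕ) (hK : 2 ≤ K) (a : Fin (K^2) → Fin K → ℂ)
    (hnorm : ∀ m, nrm (a m) = 1)
    (hcross : ∀ m n, m ≠ n → ‖inn (a m) (a n)‖ ^ 2 = 1/(K+1))
    (ν : Fin (K^2) → ℝ) :
    (1 / Real.sqrt K) * Real.sqrt (∑ m, ν m ^ 2) ≤
      frob ((((K : ℂ) + 1) / K) • ∑ m, (ν m : ℂ) •
        (outer (a m) (a m) - (((K : ℂ) + 1)⁻¹) • (1 : Matrix (Fin K) (Fin K) ℂ))) ∧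
    frob ((((K : ℂ) + 1) / K) • ∑ m, (ν m : ℂ) •
        (outer (a m) (a m) - (((K : ℂ) + 1)⁻¹) • (1 : Matrix (Fin K) (Fin K) ℂ))) ≤
      Real.sqrt (1 + 1/K) * Real.sqrt (∑ m, ν m ^ 2) := by

  classical
  have hK0 : (0:ℝ) < K := by positivity
  have hKne : (K:ℝ) ≠ 0 := ne_of_gt hK0
  have hK1ne : ((K:ℝ)+1) ≠ 0 := by positivity
  have hK1neC : ((K:ℂ)+1) ≠ 0 := by
    intro h
    have := congrArg Complex.re h
    simp at this
    linarith
  have hKneC : (K:ℂ) ≠ 0 := by exact_mod_cast (Nat.cast_ne_zero (R := ℂ)).mpr (by omega)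
  set s : ℂ := ((K:ℂ)+1)⁻¹ with hs_def
  set M : Fin (K^2) → Matrix (Fin K) (Fin K) ℂ :=
    fun m => outer (a m) (a m) - s • (1 : Matrix (Fin K) (Fin K) ℂ) with hM_def
  set A : ℝ := (K:ℝ)/(K+1) - 1/(K+1)^2 with hA_def
  set B : ℝ := -(1/(K+1)^2) with hB_def
  -- trace of products
  have tMM : ∀ m n, Matrix.trace (M m * M n) = ((if m = n then A else B : ℝ) : ℂ) := by
    intro m n
    have hst : star s = s := by
      rw [hs_def]; simp [star_inv₀]
    have expand : M m * M n =
        outer (a m) (a m) * outer (a n) (a n)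
          - s • outer (a m) (a m) - s • outer (a n) (a n)
          + (s * s) • (1 : Matrix (Fin K) (Fin K) ℂ) := by
      rw [hM_def]
      simp only [Matrix.sub_mul, Matrix.mul_sub, Matrix.smul_mul, Matrix.mul_smul,
        Matrix.one_mul, Matrix.mul_one, smul_smul]
      module
    have htr1 : Matrix.trace ((1 : Matrix (Fin K) (Fin K) ℂ)) = (K:ℂ) := by
      simp [Matrix.trace_one]
    have hself : ∀ p, inn (a p) (a p) = 1 := fun p => inn_self_eq_one _ (hnorm p)
    rw [expand]
    rw [Matrix.trace_add, Matrix.trace_sub, Matrix.trace_sub, Matrix.trace_smul,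
      Matrix.trace_smul, Matrix.trace_smul, outer_mul_outer, Matrix.trace_smul,
      trace_outer, trace_outer, trace_outer, htr1]
    by_cases hmn : m = n
    · subst hmn
      rw [hself m]
      simp only [if_pos rfl, smul_eq_mul, mul_one]
      rw [hA_def, hs_def]
      push_cast
      field_simp
      ring
    · have hcr : inn (a n) (a m) * inn (a m) (a n) = ((1:ℝ)/(K+1) : ℂ) := by
        rw [inn_conj_mul]
        rw [hcross m n hmn]
        push_cast
        ring
      rw [if_neg hmn]
      simp only [smul_eq_mul, mul_one]
      rw [hself m, hself n]
      rw [hcr, hB_def, hs_def]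
      push_cast
      field_simp
      ring
  -- Hermitian
  have herm : ∀ m, (M m)ᴴ = M m := by
    intro m
    rw [hM_def]
    simp only [Matrix.conjTranspose_sub, outer_conjT, Matrix.conjTranspose_smul,
      Matrix.conjTranspose_one]
    congr 1
    rw [hs_def]
    simp [star_inv₀]
  set T : Matrix (Fin K) (Fin K) ℂ := ∑ m, (ν m : ℂ) • M m with hT_def
  have hTH : Tᴴ = T := by
    rw [hT_def, Matrix.conjTranspose_sum]
    refine Finset.sum_congr rfl fun m _ => ?_
    rw [Matrix.conjTranspose_smul, herm]
    congr 1
    simp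
  set E : ℝ := ∑ m, ν m ^ 2 with hE_def
  set S : ℝ := ∑ m, ν m with hS_def
  have hE0 : 0 ≤ E := Finset.sum_nonneg fun m _ => sq_nonneg _
  -- trace (Tᴴ * T)
  have traceT : Matrix.trace (Tᴴ * T) = (((K:ℝ)/(K+1)) * E - S^2/(K+1)^2 : ℝ) := by
    rw [hTH, hT_def, Finset.sum_mul_sum]
    rw [Matrix.trace_sum]
    have h1 : ∀ m, Matrix.trace (∑ n, ((ν m : ℂ) • M m) * ((ν n : ℂ) • M n))
        = ((∑ n, ν m * ν n * (if m = n then A else B) : ℝ) : ℂ) := by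
      intro m
      rw [Matrix.trace_sum]
      push_cast
      refine Finset.sum_congr rfl fun n _ => ?_
      rw [Matrix.smul_mul, Matrix.mul_smul, smul_smul, Matrix.trace_smul, tMM m n]
      rw [smul_eq_mul]
      try push_cast [apply_ite (Complex.ofReal)]
      try ring
    rw [Finset.sum_congr rfl fun m _ => h1 m]
    rw [← Complex.ofReal_sum]
    congr 1
    have h2 : ∀ m, (∑ n, ν m * ν n * (if m = n then A else B))
        = ν m * ν m * (A - B) + ν m * S * B := by
      intro m
      have h3 : ∀ n, ν m * ν n * (if m = n then A else B)
          = (if m = n then ν m * ν n * (A - B) else 0) + ν m * ν n * B := by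
        intro n; split_ifs <;> ring
      simp only [h3, Finset.sum_add_distrib, Finset.sum_ite_eq, Finset.mem_univ, if_true]
      have h4 : ∑ n, ν m * ν n * B = ν m * S * B := by
        rw [hS_def, Finset.mul_sum, Finset.sum_mul]
      try rw [h4]
    rw [Finset.sum_congr rfl fun m _ => h2 m]
    rw [Finset.sum_add_distrib]
    have hAB : A - B = (K:ℝ)/(K+1) := by rw [hA_def, hB_def]; ring
    have e1 : (∑ m, ν m * ν m * (A - B)) = ((K:ℝ)/(K+1)) * E := by
      rw [hAB, hE_def, Finset.mul_sum]
      exact Finset.sum_congr rfl fun m _ => by ring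
    have e2 : (∑ m, ν m * S * B) = S * S * B := by
      rw [← Finset.sum_mul, ← Finset.sum_mul, hS_def]
    rw [e1, e2, hB_def]
    ring
  -- the full matrix
  set c : ℂ := ((K:ℂ)+1)/(K:ℂ) with hc_def
  have hcc : star c = c := by rw [hc_def]; simp
  have key : (Matrix.trace ((c • T)ᴴ * (c • T))).re
      = ((K:ℝ)+1)/K * E - S^2/(K:ℝ)^2 := by
    rw [Matrix.conjTranspose_smul, Matrix.smul_mul, Matrix.mul_smul, smul_smul,
      Matrix.trace_smul, hcc, traceT]
    have : c * c * (((K:ℝ)/(K+1)) * E - S^2/(K+1)^2 : ℝ)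
        = ((((K:ℝ)+1)/K * E - S^2/(K:ℝ)^2 : ℝ) : ℂ) := by
      rw [hc_def]
      push_cast
      field_simp
    rw [smul_eq_mul, this, Complex.ofReal_re]
  -- Cauchy-Schwarz
  have hCS : S^2 ≤ (K:ℝ)^2 * E := by
    have := sq_sum_le_card_mul_sum_sq (s := (Finset.univ : Finset (Fin (K^2)))) (f := ν)
    rw [Finset.card_univ, Fintype.card_fin] at this
    rw [hS_def, hE_def]
    calc (∑ m, ν m)^2 ≤ (K^2 : ℕ) * ∑ m, ν m ^2 := this
      _ = (K:ℝ)^2 * ∑ m, ν m ^2 := by push_cast; ring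
  set F2 : ℝ := ((K:ℝ)+1)/K * E - S^2/(K:ℝ)^2 with hF2_def
  have hlow : E / K ≤ F2 := by
    have h5 : S^2/(K:ℝ)^2 ≤ E := by
      rw [div_le_iff₀ (by positivity : (0:ℝ) < (K:ℝ)^2)]
      calc S^2 ≤ (K:ℝ)^2 * E := hCS
        _ = E * (K:ℝ)^2 := by ring
    have h6 : ((K:ℝ)+1)/K * E = E + E/K := by field_simp
    rw [hF2_def, h6]
    linarith
  have hhigh : F2 ≤ (1 + 1/(K:ℝ)) * E := by
    rw [hF2_def]
    have h7 : ((K:ℝ)+1)/K = 1 + 1/(K:ℝ)  := by field_simp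
    rw [h7]
    have : 0 ≤ S^2/(K:ℝ)^2 := by positivity
    linarith
  have frob_eq : frob (c • T) = Real.sqrt F2 := by rw [frob, key, hF2_def]
  have goal_eq : (((K : ℂ) + 1) / K) • ∑ m, (ν m : ℂ) •
        (outer (a m) (a m) - (((K : ℂ) + 1)⁻¹) • (1 : Matrix (Fin K) (Fin K) ℂ)) = c • T := by
    rw [hc_def, hT_def, hM_def, hs_def]
  rw [goal_eq, frob_eq]
  constructor
  · have : Real.sqrt (E / K) ≤ Real.sqrt F2 := Real.sqrt_le_sqrt hlow
    calc (1 / Real.sqrt K) * Real.sqrt E = Real.sqrt (E / K) := by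
          rw [Real.sqrt_div hE0]; ring
      _ ≤ Real.sqrt F2 := this
  · have : Real.sqrt F2 ≤ Real.sqrt ((1 + 1/(K:ℝ)) * E) := Real.sqrt_le_sqrt hhigh
    calc Real.sqrt F2 ≤ Real.sqrt ((1 + 1/(K:ℝ)) * E) := this
      _ = Real.sqrt (1 + 1/(K:ℝ)) * Real.sqrt E := Real.sqrt_mul (by positivity) E
end
end

section
/- Let x ∈ ℂ^K, let Q = xx*, and let ΔQ be a K×K Hermitian matrix. Let λ̃ be the largest eigenvalue of Q̃ = Q + ΔQ, assume λ̃ ≥ 0, let ũ be a corresponding unit eigenvector, and set x̃ = √λ̃ · ũ. Then there exists θ ∈ [−π, π) such that: (i) if ‖x‖² ≥ 3·‖ΔQ‖₂ then ‖x·e^{iθ} − x̃‖ ≤ 2·‖ΔQ‖₂/‖x‖; and (ii) if ‖x‖² < 3·‖ΔQ‖₂ then ‖x·e^{iθ} − x̃‖ ≤ √(7·‖ΔQ‖₂). In both cases ‖ΔQ‖₂ may be replaced by the Frobenius norm ‖ΔQ‖_F, since ‖ΔQ‖₂ ≤ ‖ΔQ‖_F. -/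
set_option maxRecDepth 8000
set_option maxHeartbeats 1000000

open Complex Matrix MeasureTheory

noncomputable section

def tE {K : ℕ} (x : Fin K → ℂ) : EuclideanSpace ℂ (Fin K) := WithLp.toLp 2 x

lemma inn_conv {K : ℕ} (x y : Fin K → ℂ) : inn x y = inner ℂ (tE y) (tE x) := by
  simp [inn, tE, PiLp.inner_apply, mul_comm, RCLike.inner_apply]

lemma nrm_conv {K : ℕ} (x : Fin K → ℂ) : nrm x = ‖tE x‖ := by
  rw [@norm_eq_sqrt_re_inner ℂ, nrm, inn_conv]; rfl

lemma nrm_nonneg {K : ℕ} (x : Fin K → ℂ) : 0 ≤ nrm x := Real.sqrt_nonneg _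

lemma tE_sub {K : ℕ} (x y : Fin K → ℂ) : tE (x - y) = tE x - tE y := rfl
lemma tE_smul {K : ℕ} (c : ℂ) (x : Fin K → ℂ) : tE (c • x) = c • tE x := rfl

lemma inn_self {K : ℕ} (x : Fin K → ℂ) : inn x x = ((nrm x : ℝ) : ℂ) ^ 2 := by
  rw [inn_conv, nrm_conv, @inner_self_eq_norm_sq_to_K ℂ]; rfl

lemma nrm_sq_sum {K : ℕ} (x : Fin K → ℂ) : nrm x ^ 2 = ∑ i, ‖x i‖ ^ 2 := by
  rw [nrm_conv]
  rw [EuclideanSpace.norm_eq]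
  rw [Real.sq_sqrt (by positivity)]
  rfl

lemma frob_sq {K : ℕ} (A : Matrix (Fin K) (Fin K) ℂ) :
    frob A ^ 2 = ∑ i, ∑ j, ‖A i j‖ ^ 2 := by
  have h : (Matrix.trace (Aᴴ * A)).re = ∑ j, ∑ i, ‖A i j‖ ^ 2 := by
    simp [Matrix.trace, Matrix.diag, Matrix.mul_apply, Complex.re_sum, conjTranspose_apply,
      Complex.sq_norm, Complex.normSq_apply, Complex.mul_re]
  rw [frob, Real.sq_sqrt (by rw [h]; positivity), h, Finset.sum_comm]

lemma frob_nonneg {K : ℕ} (A : Matrix (Fin K) (Fin K) ℂ) : 0 ≤ frob A := Real.sqrt_nonneg _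

lemma mulVec_le_frob {K : ℕ} (A : Matrix (Fin K) (Fin K) ℂ) (v : Fin K → ℂ) :
    nrm (A.mulVec v) ≤ frob A * nrm v := by
  have key : nrm (A.mulVec v) ^ 2 ≤ (frob A * nrm v) ^ 2 := by
    rw [nrm_sq_sum, mul_pow, frob_sq, Finset.sum_mul]
    apply Finset.sum_le_sum
    intro i _
    have h1 : (A.mulVec v) i = inner ℂ (tE (fun j => (starRingEnd ℂ) (A i j))) (tE v) := by
      simp [Matrix.mulVec, dotProduct, tE, PiLp.inner_apply, RCLike.inner_apply]
      exact Finset.sum_congr rfl (fun _ _ => mul_comm _ _)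
    have h2 : ‖(A.mulVec v) i‖ ≤ ‖tE (fun j => (starRingEnd ℂ) (A i j))‖ * ‖tE v‖ := by
      rw [h1]; exact norm_inner_le_norm _ _
    have h3 : ‖tE (fun j => (starRingEnd ℂ) (A i j))‖ ^ 2 = ∑ j, ‖A i j‖ ^ 2 := by
      have := nrm_sq_sum (fun j => (starRingEnd ℂ) (A i j))
      rw [nrm_conv] at this; rw [this]; simp
    calc ‖(A.mulVec v) i‖ ^ 2 ≤ (‖tE (fun j => (starRingEnd ℂ) (A i j))‖ * ‖tE v‖) ^ 2 := by
          apply pow_le_pow_left₀ (norm_nonneg _) h2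
      _ = (∑ j, ‖A i j‖ ^ 2) * nrm v ^ 2 := by
          rw [mul_pow, h3, nrm_conv]
  have h0 : 0 ≤ frob A * nrm v := mul_nonneg (frob_nonneg A) (nrm_nonneg v)
  nlinarith [nrm_nonneg (A.mulVec v)]

lemma specNorm_mem_zero {K : ℕ} (A : Matrix (Fin K) (Fin K) ℂ) :
    (0:ℝ) ∈ {r : ℝ | ∃ v : Fin K → ℂ, nrm v ≤ 1 ∧ r = nrm (A.mulVec v)} := by
  refine ⟨0, ?_, ?_⟩ <;> simp [nrm, inn, Matrix.mulVec_zero]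

lemma specNorm_bdd {K : ℕ} (A : Matrix (Fin K) (Fin K) ℂ) :
    BddAbove {r : ℝ | ∃ v : Fin K → ℂ, nrm v ≤ 1 ∧ r = nrm (A.mulVec v)} := by
  refine ⟨frob A, fun r hr => ?_⟩
  obtain ⟨v, hv, rfl⟩ := hr
  calc nrm (A.mulVec v) ≤ frob A * nrm v := mulVec_le_frob A v
    _ ≤ frob A * 1 := by apply mul_le_mul_of_nonneg_left hv (frob_nonneg A)
    _ = frob A := mul_one _

lemma specNorm_nonneg {K : ℕ} (A : Matrix (Fin K) (Fin K) ℂ) : 0 ≤ specNorm A :=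
  le_csSup (specNorm_bdd A) (specNorm_mem_zero A)

lemma specNorm_le_frob {K : ℕ} (A : Matrix (Fin K) (Fin K) ℂ) : specNorm A ≤ frob A := by
  apply csSup_le ⟨0, specNorm_mem_zero A⟩
  rintro r ⟨v, hv, rfl⟩
  calc nrm (A.mulVec v) ≤ frob A * nrm v := mulVec_le_frob A v
    _ ≤ frob A * 1 := mul_le_mul_of_nonneg_left hv (frob_nonneg A)
    _ = frob A := mul_one _

lemma nrm_smul {K : ℕ} (c : ℂ) (x : Fin K → ℂ) : nrm (c • x) = ‖c‖ * nrm x := by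
  rw [nrm_conv, nrm_conv, tE_smul, norm_smul]

lemma nrm_mulVec_le {K : ℕ} (A : Matrix (Fin K) (Fin K) ℂ) (v : Fin K → ℂ) :
    nrm (A.mulVec v) ≤ specNorm A * nrm v := by
  rcases eq_or_lt_of_le (nrm_nonneg v) with h0 | h0
  · have hv0 : tE v = 0 := by
      rw [← norm_eq_zero]; rw [nrm_conv] at h0; exact h0.symm
    have : v = 0 := congrArg WithLp.ofLp hv0
    simp [this, Matrix.mulVec_zero, nrm, inn, specNorm_nonneg]
  · set c : ℂ := (((nrm v)⁻¹ : ℝ) : ℂ)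
    have hcv : nrm (c • v) = 1 := by
      rw [nrm_smul]
      have : ‖c‖ = (nrm v)⁻¹ := by
        simp [c, Complex.norm_real, _root_.abs_of_nonneg (inv_nonneg.mpr (nrm_nonneg v)), nrm_nonneg v]
      rw [this]; field_simp
    have hmem : nrm (A.mulVec (c • v)) ∈ {r : ℝ | ∃ w : Fin K → ℂ, nrm w ≤ 1 ∧ r = nrm (A.mulVec w)} :=
      ⟨c • v, le_of_eq hcv, rfl⟩
    have hle : nrm (A.mulVec (c • v)) ≤ specNorm A := le_csSup (specNorm_bdd A) hmem
    have hsc : A.mulVec (c • v) = c • A.mulVec v := by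
      rw [Matrix.mulVec_smul]
    rw [hsc, nrm_smul] at hle
    have hc : ‖c‖ = (nrm v)⁻¹ := by
      simp [c, Complex.norm_real, _root_.abs_of_nonneg (inv_nonneg.mpr (nrm_nonneg v)), nrm_nonneg v]
    rw [hc] at hle
    calc nrm (A.mulVec v) = nrm v * ((nrm v)⁻¹ * nrm (A.mulVec v)) := by field_simp
      _ ≤ nrm v * specNorm A := by
          apply mul_le_mul_of_nonneg_left _ (le_of_lt h0)
          rwa [mul_comm] at hle ⊢
      _ = specNorm A * nrm v := mul_comm _ _

lemma inn_add_left {K : ℕ} (a b c : Fin K → ℂ) : inn (a + b) c = inn a c + inn b c := by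
  simp [inn, add_mul, Finset.sum_add_distrib]

lemma inn_smul_left {K : ℕ} (r : ℂ) (a c : Fin K → ℂ) : inn (r • a) c = r * inn a c := by
  simp [inn, Finset.mul_sum, mul_assoc]

lemma rayleigh_le {K : ℕ} (B : Matrix (Fin K) (Fin K) ℂ) (hB : B.IsHermitian) (lam : ℝ)
    (hmax : ∀ μ : ℝ, (∃ v : Fin K → ℂ, v ≠ 0 ∧ B.mulVec v = (μ:ℂ) • v) → μ ≤ lam)
    (v : Fin K → ℂ) : (inn (B.mulVec v) v).re ≤ lam * nrm v ^ 2 := by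
  have hsym : ∀ w z : EuclideanSpace ℂ (Fin K),
      (inner ℂ (tE (B.mulVec w)) z : ℂ) = inner ℂ w (tE (B.mulVec z)) :=
    fun w z => (Matrix.isHermitian_iff_isSymmetric.mp hB) w z
  set b := hB.eigenvectorBasis with hb
  have heval : ∀ i, hB.eigenvalues i ≤ lam := by
    intro i
    apply hmax
    refine ⟨b i, ?_, hB.mulVec_eigenvectorBasis i⟩
    intro h
    have h1 : ‖b i‖ = 1 := b.orthonormal.1 i
    have h2 : (b i : EuclideanSpace ℂ (Fin K)) = 0 := congrArg (WithLp.toLp 2) h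
    rw [h2, norm_zero] at h1; norm_num at h1
  have hexp : (inner ℂ (tE v) (tE (B.mulVec v)) : ℂ)
      = ∑ i, (hB.eigenvalues i : ℂ) * ((inner ℂ (tE v) (b i) : ℂ) * (inner ℂ (b i) (tE v) : ℂ)) := by
    rw [← OrthonormalBasis.sum_inner_mul_inner b (tE v) (tE (B.mulVec v))]
    apply Finset.sum_congr rfl
    intro i _
    have h1 : (inner ℂ (b i) (tE (B.mulVec v)) : ℂ) = inner ℂ (tE (B.mulVec (b i))) (tE v) :=
      (hsym (b i) (tE v)).symm
    have h2 : tE (B.mulVec (b i)) = (hB.eigenvalues i : ℂ) • (b i : EuclideanSpace ℂ (Fin K)) := by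
      have := hB.mulVec_eigenvectorBasis i
      exact congrArg tE this
    rw [h1, h2, inner_smul_left]
    push_cast
    ring_nf
    rw [Complex.conj_ofReal]
    ring
  have hre : (inn (B.mulVec v) v).re = (inner ℂ (tE v) (tE (B.mulVec v)) : ℂ).re := by
    rw [inn_conv]
  rw [hre, hexp]
  have czz : ∀ z : ℂ, (starRingEnd ℂ) z * z = ((‖z‖ ^ 2 : ℝ) : ℂ) := by
    intro z
    rw [mul_comm, Complex.mul_conj]
    rw [Complex.sq_norm]
  have hterm : ∀ i, ((hB.eigenvalues i : ℂ) * ((inner ℂ (tE v) (b i) : ℂ) * (inner ℂ (b i) (tE v) : ℂ))).re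
      = hB.eigenvalues i * ‖(inner ℂ (b i) (tE v) : ℂ)‖ ^ 2 := by
    intro i
    rw [← inner_conj_symm (b i) (tE v), Complex.mul_conj, ← Complex.ofReal_mul, Complex.ofReal_re]
    congr 1
    rw [Complex.norm_conj, Complex.normSq_eq_norm_sq]
  have hsum : ∑ i, ‖(inner ℂ (b i) (tE v) : ℂ)‖ ^ 2 = nrm v ^ 2 := by
    have h := OrthonormalBasis.sum_inner_mul_inner b (tE v) (tE v)
    have h2 : ∑ i, ((inner ℂ (tE v) (b i) : ℂ) * (inner ℂ (b i) (tE v) : ℂ))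
        = ((∑ i, ‖(inner ℂ (b i) (tE v) : ℂ)‖ ^ 2 : ℝ) : ℂ) := by
      push_cast
      apply Finset.sum_congr rfl
      intro i _
      rw [← inner_conj_symm (b i) (tE v), Complex.mul_conj]
      norm_cast
      rw [Complex.norm_conj, Complex.normSq_eq_norm_sq]
    rw [h2, @inner_self_eq_norm_sq_to_K ℂ] at h
    have := congrArg Complex.re h
    rw [Complex.ofReal_re] at this
    rw [this, nrm_conv]
    norm_cast
  rw [Complex.re_sum]
  calc ∑ i, ((hB.eigenvalues i : ℂ) * ((inner ℂ (tE v) (b i) : ℂ) * (inner ℂ (b i) (tE v) : ℂ))).re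
      = ∑ i, hB.eigenvalues i * ‖(inner ℂ (b i) (tE v) : ℂ)‖ ^ 2 :=
        Finset.sum_congr rfl (fun i _ => hterm i)
    _ ≤ ∑ i, lam * ‖(inner ℂ (b i) (tE v) : ℂ)‖ ^ 2 :=
        Finset.sum_le_sum (fun i _ => mul_le_mul_of_nonneg_right (heval i) (sq_nonneg _))
    _ = lam * ∑ i, ‖(inner ℂ (b i) (tE v) : ℂ)‖ ^ 2 := by rw [Finset.mul_sum]
    _ = lam * nrm v ^ 2 := by rw [hsum]

lemma outer_mulVec {K : ℕ} (x y w : Fin K → ℂ) :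
    (outer x y).mulVec w = inn w y • x := by
  funext i
  simp only [outer, Matrix.mulVec, dotProduct, inn, Pi.smul_apply, smul_eq_mul,
    Finset.sum_mul]
  apply Finset.sum_congr rfl
  intro j _
  ring

lemma outer_isHermitian {K : ℕ} (x : Fin K → ℂ) : (outer x x).IsHermitian := by
  ext i j
  simp [outer, Matrix.conjTranspose_apply, mul_comm]

/-- Lemma 2: perturbation bound for rank-one factorization.  If λ̃ ≥ 0 is the largest
eigenvalue of Q̃ = xx* + ΔQ with unit eigenvector ũ and x̃ = √λ̃·ũ, then for some
θ ∈ [−π,π): ‖x e^{iθ} − x̃‖ ≤ 2‖ΔQ‖₂/‖x‖ when ‖x‖² ≥ 3‖ΔQ‖₂, and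
‖x e^{iθ} − x̃‖ ≤ √(7‖ΔQ‖₂) when ‖x‖² < 3‖ΔQ‖₂; moreover ‖ΔQ‖₂ ≤ ‖ΔQ‖_F, so the
spectral norm may be replaced by the Frobenius norm. -/
theorem eigenvector_perturbation (K : ℕ) (x : Fin K → ℂ)
    (ΔQ : Matrix (Fin K) (Fin K) ℂ) (hΔQ : ΔQ.IsHermitian)
    (lam : ℝ) (hlam : 0 ≤ lam) (u : Fin K → ℂ) (hu : nrm u = 1)
    (heig : (outer x x + ΔQ).mulVec u = (lam : ℂ) • u)
    (hmax : ∀ μ : ℝ, (∃ v : Fin K → ℂ, v ≠ 0 ∧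
      (outer x x + ΔQ).mulVec v = (μ : ℂ) • v) → μ ≤ lam) :
    ∃ θ : ℝ, -Real.pi ≤ θ ∧ θ < Real.pi ∧
      (nrm x ^ 2 ≥ 3 * specNorm ΔQ →
        nrm (Complex.exp (θ * Complex.I) • x - (Real.sqrt lam : ℂ) • u)
          ≤ 2 * specNorm ΔQ / nrm x) ∧
      (nrm x ^ 2 < 3 * specNorm ΔQ →
        nrm (Complex.exp (θ * Complex.I) • x - (Real.sqrt lam : ℂ) • u)
          ≤ Real.sqrt (7 * specNorm ΔQ)) ∧
      specNorm ΔQ ≤ frob ΔQ := by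
  set N := nrm x with hN
  set n := N ^ 2 with hn
  set δ := specNorm ΔQ with hδ
  set c := inn x u with hc
  set s := ‖c‖ with hs
  set d := (inn (ΔQ.mulVec u) u).re with hd
  have hδ0 : 0 ≤ δ := specNorm_nonneg ΔQ
  have hN0 : 0 ≤ N := nrm_nonneg x
  have hQh : (outer x x + ΔQ).IsHermitian := (outer_isHermitian x).add hΔQ
  have hsym : ∀ w z : EuclideanSpace ℂ (Fin K),
      (inner ℂ (tE (ΔQ.mulVec w)) z : ℂ) = inner ℂ w (tE (ΔQ.mulVec z)) :=
    fun w z => (Matrix.isHermitian_iff_isSymmetric.mp hΔQ) w z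
  -- inn u u = 1
  have huu : inn u u = 1 := by
    rw [inn_self, hu]; norm_num
  -- eigen relation
  have F1 : (inn u x) • x + ΔQ.mulVec u = (lam : ℂ) • u := by
    rw [← outer_mulVec x x u, ← Matrix.add_mulVec, heig]
  -- inn u x = conj c
  have hcc : inn u x = (starRingEnd ℂ) c := by
    rw [hc, inn_conv, inn_conv, inner_conj_symm]
  -- d is real
  have F2 : inn (ΔQ.mulVec u) u = (d : ℂ) := by
    have hz : inn (ΔQ.mulVec u) u = inner ℂ (tE u) (tE (ΔQ.mulVec u)) := inn_conv _ _
    have hconj : (starRingEnd ℂ) (inn (ΔQ.mulVec u) u) = inn (ΔQ.mulVec u) u := by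
      rw [hz, inner_conj_symm, show inner ℂ (tE (ΔQ.mulVec u)) (tE u) = inner ℂ (tE u) (tE (ΔQ.mulVec u)) from hsym (tE u) (tE u)]
    rw [hd]
    exact (Complex.conj_eq_iff_re.mp hconj).symm
  -- lam = s² + d
  have F3 : lam = s ^ 2 + d := by
    have h := congrArg (fun z => inn z u) F1
    simp only [inn_add_left, inn_smul_left] at h
    rw [huu, hcc, F2, mul_one] at h
    have hcs : (starRingEnd ℂ) c * c = ((s ^ 2 : ℝ) : ℂ) := by
      rw [mul_comm, Complex.mul_conj, hs, Complex.sq_norm]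
    rw [hcs] at h
    have := congrArg Complex.re h
    simpa [← Complex.ofReal_pow] using this.symm
  -- |d| ≤ δ
  have F4 : |d| ≤ δ := by
    have h1 : ‖inn (ΔQ.mulVec u) u‖ ≤ nrm u * nrm (ΔQ.mulVec u) := by
      rw [inn_conv, nrm_conv, nrm_conv]
      exact norm_inner_le_norm _ _
    have h2 : nrm (ΔQ.mulVec u) ≤ δ := by
      have := nrm_mulVec_le ΔQ u
      rwa [hu, mul_one] at this
    have h3 : |d| ≤ ‖inn (ΔQ.mulVec u) u‖ := Complex.abs_re_le_norm _
    rw [hu, one_mul] at h1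
    linarith
  -- s ≤ N
  have F5 : s ≤ N := by
    have : ‖inn x u‖ ≤ nrm u * nrm x := by
      rw [inn_conv, nrm_conv, nrm_conv]
      exact norm_inner_le_norm _ _
    rw [hu, one_mul] at this
    exact this
  have F6 : lam ≤ n + δ := by
    have : s ^ 2 ≤ n := by rw [hn]; exact pow_le_pow_left₀ (norm_nonneg c) F5 2
    have habs := abs_le.mp F4
    linarith [F3]
  -- the chosen phase
  have hec : Complex.exp ((-c.arg : ℝ) * Complex.I) * c = ((s : ℝ) : ℂ) := by
    by_cases hc0 : c = 0
    · simp [hc0, hs]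
    · have habs := Complex.norm_mul_exp_arg_mul_I c
      have key : Complex.exp ((-c.arg : ℝ) * Complex.I) *
          ((‖c‖ : ℂ) * Complex.exp ((c.arg : ℝ) * Complex.I)) = ((s : ℝ) : ℂ) := by
        rw [show Complex.exp ((-c.arg : ℝ) * Complex.I) *
            ((‖c‖ : ℂ) * Complex.exp ((c.arg : ℝ) * Complex.I))
            = (‖c‖ : ℂ) * Complex.exp (((-c.arg : ℝ) : ℂ) * Complex.I
              + ((c.arg : ℝ) : ℂ) * Complex.I) from by rw [Complex.exp_add]; ring]
        rw [show ((-c.arg : ℝ) : ℂ) * Complex.I + ((c.arg : ℝ) : ℂ) * Complex.I = 0 by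
          push_cast; ring]
        rw [Complex.exp_zero, mul_one, hs]
      rw [← key]
      congr 1
      exact habs.symm
  set E := nrm (Complex.exp ((-c.arg : ℝ) * Complex.I) • x - ((Real.sqrt lam : ℝ) : ℂ) • u) with hE
  have hE0 : 0 ≤ E := nrm_nonneg _
  have hE2 : E ^ 2 = n + lam - 2 * Real.sqrt lam * s := by
    rw [hE, nrm_conv, tE_sub, tE_smul, tE_smul, @norm_sub_sq ℂ]
    have h1 : ‖Complex.exp ((-c.arg : ℝ) * Complex.I) • tE x‖ = N := by
      rw [norm_smul, Complex.norm_exp_ofReal_mul_I, one_mul, hN, nrm_conv]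
    have h2 : ‖((Real.sqrt lam : ℝ) : ℂ) • tE u‖ ^ 2 = lam := by
      rw [norm_smul]
      rw [show ‖((Real.sqrt lam : ℝ) : ℂ)‖ = Real.sqrt lam by
        rw [Complex.norm_real, Real.norm_eq_abs, _root_.abs_of_nonneg (Real.sqrt_nonneg lam)]]
      rw [show ‖tE u‖ = 1 by rw [← nrm_conv, hu]]
      rw [mul_one, Real.sq_sqrt hlam]
    have h3 : (inner ℂ (Complex.exp ((-c.arg : ℝ) * Complex.I) • tE x)
        (((Real.sqrt lam : ℝ) : ℂ) • tE u) : ℂ).re = Real.sqrt lam * s := by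
      rw [inner_smul_left, inner_smul_right]
      have hxu : (inner ℂ (tE x) (tE u) : ℂ) = (starRingEnd ℂ) c := by
        rw [← inn_conv, hcc]
      rw [hxu]
      have : (starRingEnd ℂ) (Complex.exp ((-c.arg : ℝ) * Complex.I)) *
          (((Real.sqrt lam : ℝ) : ℂ) * (starRingEnd ℂ) c)
          = ((Real.sqrt lam : ℝ) : ℂ) * (starRingEnd ℂ) (Complex.exp ((-c.arg : ℝ) * Complex.I) * c) := by
        simp only [_root_.map_mul]; ring
      rw [this, hec, Complex.conj_ofReal, ← Complex.ofReal_mul, Complex.ofReal_re]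
    rw [h1, h2]
    have h3' : RCLike.re (inner ℂ (Complex.exp ((-c.arg : ℝ) * Complex.I) • tE x)
        (((Real.sqrt lam : ℝ) : ℂ) • tE u) : ℂ) = Real.sqrt lam * s := h3
    rw [h3', hn]
    ring
  -- choose θ
  refine ⟨-c.arg, ?_, ?_, ?_, ?_, specNorm_le_frob ΔQ⟩
  · linarith [Complex.arg_le_pi c]
  · linarith [Complex.neg_pi_lt_arg c]
  · -- case (i): n ≥ 3δ
    intro hge
    rw [← hE]
    by_cases hNz : N = 0
    · have hn0 : n = 0 := by rw [hn, hNz]; ring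
      have hδz : δ = 0 := by rw [hn0] at hge; linarith only [hge, hδ0]
      have hlam0 : lam = 0 := le_antisymm (by rw [hn0, hδz] at F6; linarith only [F6]) hlam
      have hs0 : s = 0 := le_antisymm (hNz ▸ F5) (hs ▸ norm_nonneg c)
      have hEsq : E ^ 2 = 0 := by
        rw [hE2, hlam0, hn0, hs0]; simp
      have hEz : E = 0 := by
        rw [← Real.sqrt_sq hE0, hEsq, Real.sqrt_zero]
      rw [hEz, hδz]
      simp
    · have hNpos : 0 < N := lt_of_le_of_ne hN0 (Ne.symm hNz)
      have hnpos : 0 < n := by rw [hn]; exact pow_pos hNpos 2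
      -- Rayleigh lower bound: n - δ ≤ lam
      have hray := rayleigh_le (outer x x + ΔQ) hQh lam hmax x
      have hxx : inn x x = ((n : ℝ) : ℂ) := by
        rw [inn_self, ← hN, hn]; push_cast; ring
      have hinn : inn ((outer x x + ΔQ).mulVec x) x
          = ((n : ℝ) : ℂ) * ((n : ℝ) : ℂ) + inn (ΔQ.mulVec x) x := by
        rw [Matrix.add_mulVec, outer_mulVec, inn_add_left, inn_smul_left, hxx]
      have habs2 : ‖inn (ΔQ.mulVec x) x‖ ≤ δ * n := by
        have h1 : ‖inn (ΔQ.mulVec x) x‖ ≤ nrm x * nrm (ΔQ.mulVec x) := by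
          rw [inn_conv, nrm_conv, nrm_conv]
          exact norm_inner_le_norm _ _
        have h2 : nrm (ΔQ.mulVec x) ≤ δ * N := by rw [hδ, hN]; exact nrm_mulVec_le ΔQ x
        calc ‖inn (ΔQ.mulVec x) x‖ ≤ N * nrm (ΔQ.mulVec x) := h1
          _ ≤ N * (δ * N) := mul_le_mul_of_nonneg_left h2 hN0
          _ = δ * n := by rw [hn]; ring
      have hre2 : (inn ((outer x x + ΔQ).mulVec x) x).re
          = n * n + (inn (ΔQ.mulVec x) x).re := by
        rw [hinn, Complex.add_re, ← Complex.ofReal_mul, Complex.ofReal_re]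
      have hlow : n - δ ≤ lam := by
        have h4 : -(δ * n) ≤ (inn (ΔQ.mulVec x) x).re := by
          have := Complex.abs_re_le_norm (inn (ΔQ.mulVec x) x)
          have h5 := neg_abs_le (inn (ΔQ.mulVec x) x).re
          linarith only [this, h5, habs2]
        have h6 : n * n - δ * n ≤ lam * n := by
          rw [hre2] at hray
          rw [← hN, ← hn] at hray
          linarith only [hray, h4]
        have := le_of_mul_le_mul_right (by linarith only [h6] : (n - δ) * n ≤ lam * n) hnpos
        linarith only [this]
      have hs2 : s ^ 2 = lam - d := by linarith only [F3]
      have hs2lb : n - 2 * δ ≤ s ^ 2 := by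
        have habsd := abs_le.mp F4
        linarith only [hs2, hlow, habsd.1, habsd.2]
      -- w and key inequality
      set w := x - c • u with hw
      have hNx : ‖tE x‖ = N := by rw [← nrm_conv]
      have hcu : (inner ℂ (tE x) (c • tE u) : ℂ) = ((s ^ 2 : ℝ) : ℂ) := by
        rw [inner_smul_right]
        rw [show (inner ℂ (tE x) (tE u) : ℂ) = (starRingEnd ℂ) c from by rw [← inn_conv, hcc]]
        rw [mul_comm, mul_comm ((starRingEnd ℂ) c) c]
        rw [Complex.mul_conj, hs, Complex.sq_norm]
      have hwsq : nrm w ^ 2 = n - s ^ 2 := by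
        rw [hw, nrm_conv, tE_sub, tE_smul, @norm_sub_sq ℂ, hNx]
        have hre3 : RCLike.re (inner ℂ (tE x) (c • tE u) : ℂ) = s ^ 2 := by
          rw [hcu]; exact Complex.ofReal_re _
        rw [hre3]
        have : ‖c • tE u‖ ^ 2 = s ^ 2 := by
          rw [norm_smul, show ‖tE u‖ = 1 from by rw [← nrm_conv, hu], mul_one, hs]
        rw [this, hn]
        ring
      have hvec : (starRingEnd ℂ) c • w = ((d : ℝ) : ℂ) • u - ΔQ.mulVec u := by
        have e1 : (inn u x) • x = (lam : ℂ) • u - ΔQ.mulVec u := eq_sub_of_add_eq F1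
        have hcs : (starRingEnd ℂ) c * c = ((s ^ 2 : ℝ) : ℂ) := by
          rw [mul_comm, Complex.mul_conj, hs, Complex.sq_norm]
        have hld : (lam : ℂ) - ((s ^ 2 : ℝ) : ℂ) = ((d : ℝ) : ℂ) := by
          norm_cast; linarith only [F3]
        calc (starRingEnd ℂ) c • w
            = (starRingEnd ℂ) c • x - ((starRingEnd ℂ) c * c) • u := by
              rw [hw, smul_sub, smul_smul]
          _ = ((lam : ℂ) • u - ΔQ.mulVec u) - ((s ^ 2 : ℝ) : ℂ) • u := by
              rw [hcs, ← hcc, e1]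
          _ = ((lam : ℂ) - ((s ^ 2 : ℝ) : ℂ)) • u - ΔQ.mulVec u := by
              rw [sub_smul]; abel
          _ = ((d : ℝ) : ℂ) • u - ΔQ.mulVec u := by rw [hld]
      have hlhs : nrm ((starRingEnd ℂ) c • w) = s * nrm w := by
        rw [nrm_smul, hs, RCLike.norm_conj]
      have hrhs : nrm (((d : ℝ) : ℂ) • u - ΔQ.mulVec u) ^ 2 ≤ δ ^ 2 - d ^ 2 := by
        rw [nrm_conv, tE_sub, tE_smul, @norm_sub_sq ℂ]
        have ha : ‖((d : ℝ) : ℂ) • tE u‖ ^ 2 = d ^ 2 := by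
          rw [norm_smul, show ‖tE u‖ = 1 from by rw [← nrm_conv, hu], mul_one,
            Complex.norm_real, Real.norm_eq_abs]
          exact sq_abs d
        have hb : RCLike.re (inner ℂ (((d : ℝ) : ℂ) • tE u) (tE (ΔQ.mulVec u)) : ℂ) = d ^ 2 := by
          rw [inner_smul_left, Complex.conj_ofReal]
          rw [show (inner ℂ (tE u) (tE (ΔQ.mulVec u)) : ℂ) = ((d : ℝ) : ℂ) from by
            rw [← inn_conv, F2]]
          rw [← Complex.ofReal_mul]
          show ((d * d : ℝ) : ℂ).re = d ^ 2
          rw [Complex.ofReal_re]; ring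
        have hcnorm : ‖tE (ΔQ.mulVec u)‖ ^ 2 ≤ δ ^ 2 := by
          have h2 : nrm (ΔQ.mulVec u) ≤ δ := by
            have := nrm_mulVec_le ΔQ u
            rw [hu, mul_one] at this
            rw [hδ]; exact this
          rw [← nrm_conv]
          exact pow_le_pow_left₀ (nrm_nonneg _) h2 2
        have hsq' : ‖((d : ℝ) : ℂ) • tE u‖ ^ 2 - 2 * RCLike.re
            (inner ℂ (((d : ℝ) : ℂ) • tE u) (tE (ΔQ.mulVec u)) : ℂ) + ‖tE (ΔQ.mulVec u)‖ ^ 2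
            ≤ δ ^ 2 - d ^ 2 := by
          rw [ha, hb]; linarith
        exact hsq'
      have key2 : s ^ 2 * (n - s ^ 2) ≤ δ ^ 2 - d ^ 2 := by
        have heqn := congrArg nrm hvec
        rw [hlhs] at heqn
        have h7 : (s * nrm w) ^ 2 ≤ δ ^ 2 - d ^ 2 := by
          rw [heqn]; exact hrhs
        calc s ^ 2 * (n - s ^ 2) = s ^ 2 * nrm w ^ 2 := by rw [hwsq]
          _ = (s * nrm w) ^ 2 := by ring
          _ ≤ δ ^ 2 - d ^ 2 := h7
      -- assemble
      have hsq : Real.sqrt lam ^ 2 = lam := Real.sq_sqrt hlam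
      have hEP : E ^ 2 = (Real.sqrt lam - s) ^ 2 + (n - s ^ 2) := by
        rw [hE2, sub_sq]; linarith only [hsq]
      have hPQ : (Real.sqrt lam - s) ^ 2 * ((Real.sqrt lam + s) ^ 2) = d ^ 2 := by
        have h5 : (Real.sqrt lam - s) * (Real.sqrt lam + s) = lam - s ^ 2 := by
          have hr : (Real.sqrt lam - s) * (Real.sqrt lam + s) = Real.sqrt lam ^ 2 - s ^ 2 := by
            ring
          rw [hr, hsq]
        calc (Real.sqrt lam - s) ^ 2 * ((Real.sqrt lam + s) ^ 2)
            = ((Real.sqrt lam - s) * (Real.sqrt lam + s)) ^ 2 := by ring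
          _ = (lam - s ^ 2) ^ 2 := by rw [h5]
          _ = d ^ 2 := by rw [hs2]; ring
      have hcross : 0 ≤ Real.sqrt lam * s := mul_nonneg (Real.sqrt_nonneg _) (hs ▸ norm_nonneg c)
      have hQlb : 2 * n - 3 * δ ≤ (Real.sqrt lam + s) ^ 2 := by
        rw [add_sq]; linarith only [hsq, hlow, hs2lb, hcross]
      have hdenom1 : 0 < 2 * n - 3 * δ := by linarith only [hge, hnpos, hδ0]
      have hdenom2 : 0 < n - 2 * δ := by linarith only [hge, hnpos, hδ0]
      have hP0 : 0 ≤ (Real.sqrt lam - s) ^ 2 := sq_nonneg _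
      have hW0 : 0 ≤ n - s ^ 2 := by linarith only [hwsq, sq_nonneg (nrm w)]
      have hd2 : d ^ 2 ≤ δ ^ 2 := sq_le_sq' (abs_le.mp F4).1 (abs_le.mp F4).2
      have hPle : (Real.sqrt lam - s) ^ 2 * (2 * n - 3 * δ) ≤ δ ^ 2 := by
        calc (Real.sqrt lam - s) ^ 2 * (2 * n - 3 * δ)
            ≤ (Real.sqrt lam - s) ^ 2 * ((Real.sqrt lam + s) ^ 2) :=
              mul_le_mul_of_nonneg_left hQlb hP0
          _ = d ^ 2 := hPQ
          _ ≤ δ ^ 2 := hd2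
      have hWle : (n - s ^ 2) * (n - 2 * δ) ≤ δ ^ 2 := by
        calc (n - s ^ 2) * (n - 2 * δ) ≤ (n - s ^ 2) * s ^ 2 :=
              mul_le_mul_of_nonneg_left hs2lb hW0
          _ = s ^ 2 * (n - s ^ 2) := by ring
          _ ≤ δ ^ 2 - d ^ 2 := key2
          _ ≤ δ ^ 2 := by linarith only [sq_nonneg d]
      have t1 : (Real.sqrt lam - s) ^ 2 * (2 * n - 3 * δ) * (n * (n - 2 * δ))
          ≤ δ ^ 2 * (n * (n - 2 * δ)) :=
        mul_le_mul_of_nonneg_right hPle (mul_nonneg hnpos.le hdenom2.le)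
      have t2 : (n - s ^ 2) * (n - 2 * δ) * (n * (2 * n - 3 * δ))
          ≤ δ ^ 2 * (n * (2 * n - 3 * δ)) :=
        mul_le_mul_of_nonneg_right hWle (mul_nonneg hnpos.le hdenom1.le)
      have t3 : 0 ≤ δ ^ 2 * ((n - 3 * δ) * (5 * n - 8 * δ)) := by
        apply mul_nonneg (sq_nonneg δ)
        apply mul_nonneg (by linarith) (by linarith)
      have hfinal : E ^ 2 * n ≤ (2 * δ) ^ 2 := by
        have hprod : (E ^ 2 * n) * ((2 * n - 3 * δ) * (n - 2 * δ))
            ≤ ((2 * δ) ^ 2) * ((2 * n - 3 * δ) * (n - 2 * δ)) := by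
          rw [hEP]
          linarith only [t1, t2, t3]
        exact le_of_mul_le_mul_right hprod (mul_pos hdenom1 hdenom2)
      have h2δN : 0 ≤ 2 * δ / N := div_nonneg (by linarith) hN0
      have hEsq : E ^ 2 ≤ (2 * δ / N) ^ 2 := by
        rw [div_pow]
        rw [le_div_iff₀ (pow_pos hNpos 2)]
        rw [← hn]
        exact hfinal
      calc E = Real.sqrt (E ^ 2) := (Real.sqrt_sq hE0).symm
        _ ≤ Real.sqrt ((2 * δ / N) ^ 2) := Real.sqrt_le_sqrt hEsq
        _ = 2 * δ / N := Real.sqrt_sq h2δN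
  · -- case (ii): n < 3δ
    intro hlt
    rw [← hE]
    have hcross : 0 ≤ Real.sqrt lam * s := mul_nonneg (Real.sqrt_nonneg _) (hs ▸ norm_nonneg c)
    have h7 : E ^ 2 ≤ 7 * δ := by
      rw [hE2]; linarith only [F6, hlt, hcross]
    calc E = Real.sqrt (E ^ 2) := (Real.sqrt_sq hE0).symm
      _ ≤ Real.sqrt (7 * δ) := Real.sqrt_le_sqrt h7
end
end

section
/- Let v₁,…,v_L ∈ ℂ^N, let x ∈ ℂ^N, and set b_l = |⟨x, v_l⟩|² for l = 1,…,L. Assume: (i) there exist real numbers c₁,…,c_L such that the Hermitian matrix Y = Σ_{l=1}^{L} c_l · v_l v_l* satisfies Y x = 0 and ⟨Y u, u⟩ > 0 for every nonzero u ∈ ℂ^N with ⟨u, x⟩ = 0; and (ii) the only matrix of the form Z = x y* + y x* (y ∈ ℂ^N) with trace(v_l v_l* · Z) = 0 for all l = 1,…,L is Z = 0. Then the unique Hermitian positive semidefinite matrix X with trace(v_l v_l* · X) = b_l for all l = 1,…,L is X = x x*. (Lemma 3: a dual certificate plus injectivity on T_x forces uniqueness of the PSD feasible point of the PhaseLift program.)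 -/
open Complex Matrix MeasureTheory

noncomputable section

open scoped ComplexOrder
lemma trace_mul_outer {N : ℕ} (A : Matrix (Fin N) (Fin N) ℂ) (x y : Fin N → ℂ) :
    Matrix.trace (A * outer x y) = inn (A.mulVec x) y := by
  simp only [Matrix.trace, Matrix.diag, Matrix.mul_apply, outer, inn, Matrix.mulVec, dotProduct,
    Finset.sum_mul, Finset.mul_sum]
  exact Finset.sum_congr rfl fun i _ => Finset.sum_congr rfl fun j _ => by
    simp only [starRingEnd_apply, star_star]; ring

lemma trace_outer_mul {N : ℕ} (A : Matrix (Fin N) (Fin N) ℂ) (x y : Fin N → ℂ) :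
    Matrix.trace (outer x y * A) = inn (A.mulVec x) y := by
  rw [Matrix.trace_mul_comm, trace_mul_outer]

lemma inn_self_eq_zero {N : ℕ} {x : Fin N → ℂ} (h : inn x x = 0) : x = 0 := by
  funext i
  have h2 : ∑ i, Complex.normSq (x i) = 0 := by
    have := congrArg Complex.re h
    simpa [inn, Complex.mul_conj] using this
  have := (Finset.sum_eq_zero_iff_of_nonneg (fun i _ => Complex.normSq_nonneg (x i))).mp h2 i
    (Finset.mem_univ i)
  simpa using Complex.normSq_eq_zero.mp this

lemma inn_mulVec_right {N : ℕ} (A : Matrix (Fin N) (Fin N) ℂ) (w z : Fin N → ℂ) :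
    inn (A.mulVec w) z = inn w (Aᴴ.mulVec z) := by
  simp only [inn, Matrix.mulVec, dotProduct, Matrix.conjTranspose_apply, map_sum, _root_.map_mul,
    Finset.sum_mul, Finset.mul_sum, RingHomCompTriple.comp_apply, RingHom.id_apply]
  rw [Finset.sum_comm]
  exact Finset.sum_congr rfl fun i _ => Finset.sum_congr rfl fun j _ => by
    simp only [starRingEnd_apply, star_star]; ring

lemma inn_sub_left {N : ℕ} (u w z : Fin N → ℂ) : inn (u - w) z = inn u z - inn w z := by
  simp [inn, sub_mul, Finset.sum_sub_distrib]

lemma inn_add_right {N : ℕ} (u w z : Fin N → ℂ) : inn u (w + z) = inn u w + inn u z := by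
  simp [inn, mul_add, Finset.sum_add_distrib]

lemma inn_smul_left_s10 {N : ℕ} (a : ℂ) (u z : Fin N → ℂ) : inn (a • u) z = a * inn u z := by
  simp [inn, Finset.mul_sum]; exact Finset.sum_congr rfl fun i _ => by ring

lemma inn_smul_right {N : ℕ} (a : ℂ) (u z : Fin N → ℂ) :
    inn u (a • z) = (starRingEnd ℂ) a * inn u z := by
  simp [inn, Finset.mul_sum]; exact Finset.sum_congr rfl fun i _ => by ring

lemma outer_herm {N : ℕ} (w : Fin N → ℂ) : (outer w w)ᴴ = outer w w := by
  ext i j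
  simp only [Matrix.conjTranspose_apply, outer, starRingEnd_apply, star_mul', star_star]
  exact mul_comm _ _

/-- Lemma 3: if a dual certificate Y = Σ c_l v_l v_l* exists (Yx = 0 and Y positive
definite on the orthogonal complement of x) and the measurement map is injective on
the tangent space T_x = {xy* + yx*}, then X = xx* is the unique Hermitian PSD matrix
satisfying trace(v_l v_l*·X) = |⟨x,v_l⟩|² for all l. -/
theorem dual_certificate_unique_PSD (N L : ℕ) (v : Fin L → Fin N → ℂ) (x : Fin N → ℂ)
    (hcert : ∃ c : Fin L → ℝ,
      (∑ l, (c l : ℂ) • outer (v l) (v l)).mulVec x = 0 ∧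
      (∀ u : Fin N → ℂ, u ≠ 0 → inn u x = 0 →
        0 < (inn ((∑ l, (c l : ℂ) • outer (v l) (v l)).mulVec u) u).re))
    (hinj : ∀ y : Fin N → ℂ,
      (∀ l, Matrix.trace (outer (v l) (v l) * (outer x y + outer y x)) = 0) →
      outer x y + outer y x = 0) :
    ((outer x x).PosSemidef ∧
      ∀ l, Matrix.trace (outer (v l) (v l) * outer x x)
        = ((‖inn x (v l)‖ ^ 2 : ℝ) : ℂ)) ∧
    (∀ X : Matrix (Fin N) (Fin N) ℂ, X.PosSemidef →
      (∀ l, Matrix.trace (outer (v l) (v l) * X)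
        = ((‖inn x (v l)‖ ^ 2 : ℝ) : ℂ)) →
      X = outer x x) := by
  obtain ⟨c, hYx, hYpos⟩ := hcert
  set Y : Matrix (Fin N) (Fin N) ℂ := ∑ l, (c l : ℂ) • outer (v l) (v l) with hYdef
  -- feasibility trace
  have htr : ∀ l, Matrix.trace (outer (v l) (v l) * outer x x)
      = ((‖inn x (v l)‖ ^ 2 : ℝ) : ℂ) := by
    intro l
    rw [trace_outer_mul]
    have h1 : (outer x x).mulVec (v l) = (starRingEnd ℂ) (inn x (v l)) • x := by
      funext j
      simp only [outer, Matrix.mulVec, dotProduct, inn, Pi.smul_apply, smul_eq_mul, map_sum,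
        _root_.map_mul, starRingEnd_apply, star_star, Finset.sum_mul, Finset.mul_sum]
      exact Finset.sum_congr rfl fun i _ => by ring
    rw [h1, inn_smul_left_s10]
    have : inn x (v l) * (starRingEnd ℂ) (inn x (v l)) = ((‖inn x (v l)‖ ^ 2 : ℝ) : ℂ) := by
      rw [Complex.mul_conj]; rw [Complex.sq_norm]
    rw [mul_comm]; exact this
  -- PSD of outer x x
  have hherm : (outer x x).IsHermitian := outer_herm x
  have hpsd : (outer x x).PosSemidef := by
    refine Matrix.PosSemidef.of_dotProduct_mulVec_nonneg hherm fun u => ?_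
    have key : star u ⬝ᵥ (outer x x).mulVec u
        = star (∑ k, (starRingEnd ℂ) (x k) * u k) * (∑ k, (starRingEnd ℂ) (x k) * u k) := by
      simp only [dotProduct, Matrix.mulVec, outer, Pi.star_apply, star_sum, star_mul',
        Finset.sum_mul, Finset.mul_sum, starRingEnd_apply, star_star]
      rw [Finset.sum_comm]
      exact Finset.sum_congr rfl fun i _ => Finset.sum_congr rfl fun j _ => by ring
    rw [key]; exact star_mul_self_nonneg _
  refine ⟨⟨hpsd, htr⟩, ?_⟩
  -- uniqueness
  intro X hX hXtr
  -- Y is hermitian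
  have hYherm : Yᴴ = Y := by
    rw [hYdef, Matrix.conjTranspose_sum]
    refine Finset.sum_congr rfl fun l _ => ?_
    rw [Matrix.conjTranspose_smul]
    rw [outer_herm]
    congr 1
    simp
  -- pointwise positivity of Y
  have hpt : ∀ u : Fin N → ℂ, 0 ≤ (inn (Y.mulVec u) u).re ∧
      ((inn (Y.mulVec u) u).re = 0 → ∃ a : ℂ, u = a • x) := by
    intro u
    set a : ℂ := inn u x / inn x x with hadef
    set w : Fin N → ℂ := u - a • x with hwdef
    have hwx : inn w x = 0 := by
      rw [hwdef, inn_sub_left, inn_smul_left_s10]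
      by_cases hxx : inn x x = 0
      · have hx0 : x = 0 := inn_self_eq_zero hxx
        simp [hx0, inn]
      · rw [hadef]; field_simp; simp
    have hYu : Y.mulVec u = Y.mulVec w := by
      have : u = w + a • x := by funext i; simp [hwdef]
      rw [this, Matrix.mulVec_add, Matrix.mulVec_smul, hYx, smul_zero, add_zero]
    have hsplit : inn (Y.mulVec u) u = inn (Y.mulVec w) w := by
      rw [hYu]
      have : u = w + a • x := by funext i; simp [hwdef]
      rw [this, inn_add_right, inn_smul_right]
      have h0 : inn (Y.mulVec w) x = 0 := by
        rw [inn_mulVec_right, hYherm, hYx]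
        simp [inn]
      rw [h0, mul_zero, add_zero]
    by_cases hw : w = 0
    · constructor
      · rw [hsplit, hw]; simp [inn, Matrix.mulVec]
      · intro _
        exact ⟨a, by rw [← sub_eq_zero]; rw [hwdef] at hw; exact hw⟩
    · have hpos := hYpos w hw hwx
      rw [← hsplit] at hpos
      exact ⟨le_of_lt hpos, fun h => absurd h (ne_of_gt hpos)⟩
  -- trace(Y * outer x x) = 0
  have hsum : ∑ l, (c l : ℂ) * ((‖inn x (v l)‖ ^ 2 : ℝ) : ℂ) = 0 := by
    have h1 : Matrix.trace (Y * outer x x) = ∑ l, (c l : ℂ) * ((‖inn x (v l)‖ ^ 2 : ℝ) : ℂ) := by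
      rw [hYdef, Matrix.sum_mul, Matrix.trace_sum]
      exact Finset.sum_congr rfl fun l _ => by
        rw [Matrix.smul_mul, Matrix.trace_smul, htr l, smul_eq_mul]
    have h2 : Matrix.trace (Y * outer x x) = 0 := by
      rw [trace_mul_outer, hYx]; simp [inn]
    rw [← h1, h2]
  have htrYX : Matrix.trace (Y * X) = 0 := by
    have h1 : Matrix.trace (Y * X) = ∑ l, (c l : ℂ) * ((‖inn x (v l)‖ ^ 2 : ℝ) : ℂ) := by
      rw [hYdef, Matrix.sum_mul, Matrix.trace_sum]
      exact Finset.sum_congr rfl fun l _ => by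
        rw [Matrix.smul_mul, Matrix.trace_smul, hXtr l, smul_eq_mul]
    rw [h1, hsum]
  -- factor X
  obtain ⟨B, hB⟩ : ∃ B : Matrix (Fin N) (Fin N) ℂ, X = Bᴴ * B := by
    open scoped MatrixOrder in
    obtain ⟨B, hB⟩ := CStarAlgebra.nonneg_iff_eq_star_mul_self.mp hX.nonneg
    exact ⟨B, hB⟩
  set u : Fin N → Fin N → ℂ := fun i k => star (B i k) with hudef
  have htrB : Matrix.trace (Y * X) = ∑ i, inn (Y.mulVec (u i)) (u i) := by
    rw [hB]
    rw [show Y * (Bᴴ * B) = (Y * Bᴴ) * B by rw [Matrix.mul_assoc],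
      Matrix.trace_mul_comm, ← Matrix.mul_assoc]
    simp only [Matrix.trace, Matrix.diag, Matrix.mul_apply, Matrix.conjTranspose_apply,
      inn, Matrix.mulVec, dotProduct, Finset.sum_mul, Finset.mul_sum, hudef,
      starRingEnd_apply, star_star]
    refine Finset.sum_congr rfl fun i _ => ?_
    rw [Finset.sum_comm]
    exact Finset.sum_congr rfl fun j _ => Finset.sum_congr rfl fun k _ => by ring
  have hre : ∀ i, (inn (Y.mulVec (u i)) (u i)).re = 0 := by
    have hsum0 : ∑ i, (inn (Y.mulVec (u i)) (u i)).re = 0 := by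
      have := congrArg Complex.re (htrB.symm.trans htrYX)
      simpa [Complex.re_sum] using this
    intro i
    exact (Finset.sum_eq_zero_iff_of_nonneg (fun i _ => (hpt (u i)).1)).mp hsum0 i
      (Finset.mem_univ i)
  choose a ha using fun i => (hpt (u i)).2 (hre i)
  set t : ℂ := ∑ i, a i * star (a i) with htdef
  have hXeq : X = t • outer x x := by
    rw [hB]
    ext j k
    simp only [Matrix.mul_apply, Matrix.conjTranspose_apply, Matrix.smul_apply, outer,
      smul_eq_mul, htdef, Finset.sum_mul]
    have hBjk : ∀ i, star (B i j) * B i k = (a i * star (a i)) * (x j * (starRingEnd ℂ) (x k)) := by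
      intro i
      have h1 : star (B i j) = a i * x j := by
        have := congrFun (ha i) j
        simpa [hudef] using this
      have h2 : star (B i k) = a i * x k := by
        have := congrFun (ha i) k
        simpa [hudef] using this
      have h3 : B i k = star (a i * x k) := by rw [← h2, star_star]
      rw [h1, h3]
      simp only [star_mul', starRingEnd_apply]
      ring
    rw [Finset.sum_congr rfl fun i _ => hBjk i]
  have hts : star t = t := by
    rw [htdef, star_sum]
    exact Finset.sum_congr rfl fun i _ => by
      rw [star_mul', star_star, mul_comm]
  -- tangent space vector
  set y : Fin N → ℂ := ((t - 1) / 2) • x with hydef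
  have hZ : outer x y + outer y x = X - outer x x := by
    ext j k
    simp only [Matrix.add_apply, Matrix.sub_apply, outer, hydef, Pi.smul_apply, smul_eq_mul,
      hXeq, Matrix.smul_apply]
    have hc : (starRingEnd ℂ) ((t - 1) / 2) = (t - 1) / 2 := by
      rw [map_div₀, map_sub]
      rw [show (starRingEnd ℂ) t = t from hts, Complex.conj_ofNat, _root_.map_one]
    rw [_root_.map_mul, hc]
    ring
  have hz0 : ∀ l, Matrix.trace (outer (v l) (v l) * (outer x y + outer y x)) = 0 := by
    intro l
    rw [hZ, Matrix.mul_sub, Matrix.trace_sub, hXtr l, htr l, sub_self]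
  have := hinj y hz0
  rw [hZ] at this
  exact sub_eq_zero.mp this
end
end
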